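/- arXiv:1501.02518 — 5 statements merged into one kernel-verified Lean document; each statement's English description precedes it below -/
import Mathlib

section
/- Let X be a real-valued integrable random variable on a probability space (Ω, F, P) and let α ∈ (0,1). Then AVaR_α(X) = min_{s ∈ ℝ} { s + (1/(1-α)) · E[(X - s)^+] }, i.e. the infimum over s ∈ ℝ of s + (1/(1-α))·E[(X-s)^+] is attained and equals the Average-Value-at-Risk of X at level α. -/
open MeasureTheory

/-- Value-at-Risk of `X` at level `t`: `VaR_t(X) = inf { x : P(X ≤ x) ≥ t }`. -/
noncomputable def VaR {Ω : Type*} [MeasurableSpace Ω] (P : Measure Ω) (t : ℝ)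
    (X : Ω → ℝ) : ℝ :=
  sInf {x : ℝ | t ≤ (P {ω | X ω ≤ x}).toReal}

/-- Average-Value-at-Risk of `X` at level `α`:
`AVaR_α(X) = (1/(1-α)) ∫_α^1 VaR_t(X) dt`. -/
noncomputable def AVaR {Ω : Type*} [MeasurableSpace Ω] (P : Measure Ω) (α : ℝ)
    (X : Ω → ℝ) : ℝ :=
  (1 - α)⁻¹ * ∫ t in α..1, VaR P t X

namespace AVaRAux

open ProbabilityTheory Set Filter

open scoped ENNReal Topology

variable (μ : Measure ℝ) [IsProbabilityMeasure μ]

/-- The left-continuous quantile function of a real probability measure. -/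
noncomputable def qf (t : ℝ) : ℝ := sInf {x : ℝ | t ≤ cdf μ x}

lemma nonempty_S {t : ℝ} (ht : t < 1) : {x : ℝ | t ≤ cdf μ x}.Nonempty := by
  obtain ⟨x, hx⟩ := (Filter.Tendsto.eventually_const_le ht (tendsto_cdf_atTop μ)).exists
  exact ⟨x, hx⟩

lemma bddBelow_S {t : ℝ} (ht : 0 < t) : BddBelow {x : ℝ | t ≤ cdf μ x} := by
  obtain ⟨x₀, hx₀⟩ := (Filter.Tendsto.eventually_lt_const ht (tendsto_cdf_atBot μ)).exists
  refine ⟨x₀, fun x hx => ?_⟩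
  by_contra hlt
  push_neg at hlt
  exact absurd (hx.trans (monotone_cdf μ hlt.le)) (not_le.mpr hx₀)

lemma le_cdf_qf {t : ℝ} (ht : t ∈ Ioo (0:ℝ) 1) : t ≤ cdf μ (qf μ t) := by
  have h2 : ContinuousWithinAt (cdf μ) (Ioi (qf μ t)) (qf μ t) :=
    ((cdf μ).right_continuous _).mono Ioi_subset_Ici_self
  refine ge_of_tendsto h2 ?_
  filter_upwards [eventually_mem_nhdsWithin] with x hx
  obtain ⟨y, hy, hyx⟩ := exists_lt_of_csInf_lt (nonempty_S μ ht.2) hx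
  exact hy.trans (monotone_cdf μ hyx.le)

lemma qf_le_iff {t : ℝ} (ht : t ∈ Ioo (0:ℝ) 1) (y : ℝ) :
    qf μ t ≤ y ↔ t ≤ cdf μ y :=
  ⟨fun h => (le_cdf_qf μ ht).trans (monotone_cdf μ h),
   fun h => csInf_le (bddBelow_S μ ht.1) h⟩

lemma qf_monoOn : MonotoneOn (qf μ) (Ioo (0:ℝ) 1) := fun a ha b hb hab =>
  csInf_le_csInf (bddBelow_S μ ha.1) (nonempty_S μ hb.2)
    (fun x hx => le_trans hab hx)

lemma key (s : ℝ) :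
    ∫⁻ u in Ioo (0:ℝ) 1, ENNReal.ofReal (max (qf μ u - s) 0) =
      ∫⁻ x, ENNReal.ofReal (max (x - s) 0) ∂μ := by
  have hqm : AEMeasurable (qf μ) (volume.restrict (Ioo (0:ℝ) 1)) :=
    aemeasurable_restrict_of_monotoneOn measurableSet_Ioo (qf_monoOn μ)
  have hm : Measurable (fun x : ℝ => max (x - s) 0) := by fun_prop
  have hgm : AEMeasurable (fun u => max (qf μ u - s) 0) (volume.restrict (Ioo (0:ℝ) 1)) :=
    (hqm.sub aemeasurable_const).max aemeasurable_const
  rw [lintegral_eq_lintegral_meas_lt (volume.restrict (Ioo (0:ℝ) 1))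
        (f := fun u => max (qf μ u - s) 0)
        (Eventually.of_forall fun u => le_max_right (qf μ u - s) 0) hgm,
      lintegral_eq_lintegral_meas_lt μ (f := fun x => max (x - s) 0)
        (Eventually.of_forall fun x => le_max_right (x - s) 0) hm.aemeasurable]
  refine setLIntegral_congr_fun measurableSet_Ioi (fun t ht => ?_)
  have ht0 : (0:ℝ) < t := ht
  have h1 : {x : ℝ | t < max (x - s) 0} = Ioi (s + t) := by
    ext x
    simp only [mem_setOf_eq, lt_max_iff, mem_Ioi]
    constructor
    · rintro (h | h) <;> linarith
    · intro h; left; linarith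
  have h2 : {u : ℝ | t < max (qf μ u - s) 0} ∩ Ioo (0:ℝ) 1 = Ioo (cdf μ (s + t)) 1 := by
    ext u
    simp only [mem_inter_iff, mem_setOf_eq, mem_Ioo, lt_max_iff]
    constructor
    · rintro ⟨h | h, hu0, hu1⟩
      · refine ⟨?_, hu1⟩
        by_contra hle
        push_neg at hle
        have := (qf_le_iff μ ⟨hu0, hu1⟩ (s + t)).mpr hle
        linarith
      · linarith
    · rintro ⟨hc, hu1⟩
      have hu0 : 0 < u := lt_of_le_of_lt (cdf_nonneg μ _) hc
      refine ⟨Or.inl ?_, hu0, hu1⟩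
      by_contra hle
      push_neg at hle
      have : qf μ u ≤ s + t := by linarith
      have := (qf_le_iff μ ⟨hu0, hu1⟩ (s + t)).mp this
      linarith
  rw [Measure.restrict_apply' measurableSet_Ioo, h1, h2, Real.volume_Ioo]
  have hIoi : Ioi (s + t) = (Iic (s + t))ᶜ := compl_Iic.symm
  rw [hIoi, prob_compl_eq_one_sub measurableSet_Iic, ← ofReal_cdf μ (s + t),
    ENNReal.ofReal_sub _ (cdf_nonneg μ _), ENNReal.ofReal_one]

end AVaRAux

/-- For an integrable random variable `X` and `α ∈ (0,1)`, the Average-Value-at-Risk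
equals the minimum over `s ∈ ℝ` of `s + (1/(1-α)) E[(X - s)⁺]`, and this minimum is
attained. -/
theorem avar_eq_min_of_representation
    {Ω : Type*} [MeasurableSpace Ω] (P : Measure Ω) [IsProbabilityMeasure P]
    (X : Ω → ℝ) (hX : Integrable X P) (α : ℝ) (hα : α ∈ Set.Ioo (0 : ℝ) 1) :
    IsLeast (Set.range fun s : ℝ => s + (1 - α)⁻¹ * ∫ ω, max (X ω - s) 0 ∂P)
      (AVaR P α X) := by
  open AVaRAux ProbabilityTheory Set Filter in
  set μ : Measure ℝ := P.map X with hμ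
  haveI : IsProbabilityMeasure μ := Measure.isProbabilityMeasure_map hX.aemeasurable
  have hα1 : (0:ℝ) < 1 - α := by linarith [hα.2]
  -- VaR equals the quantile function of μ
  have hVaR : ∀ t, VaR P t X = qf μ t := by
    intro t
    have hset : {x : ℝ | t ≤ (P {ω | X ω ≤ x}).toReal} = {x : ℝ | t ≤ cdf μ x} := by
      ext x
      simp only [Set.mem_setOf_eq, cdf_eq_real, measureReal_def]
      rw [hμ, Measure.map_apply_of_aemeasurable hX.aemeasurable measurableSet_Iic]
      rfl
    rw [VaR, qf, hset]
  have hqm : AEMeasurable (qf μ) (volume.restrict (Ioo (0:ℝ) 1)) :=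
    aemeasurable_restrict_of_monotoneOn measurableSet_Ioo (qf_monoOn μ)
  -- integrability on the μ side
  have hXint : ∀ s : ℝ, Integrable (fun x => max (x - s) 0) μ := by
    intro s
    have hm : Measurable (fun x : ℝ => max (x - s) 0) := by fun_prop
    have h := (integrable_map_measure hm.aestronglyMeasurable hX.aemeasurable).mpr
      (show Integrable ((fun x : ℝ => max (x - s) 0) ∘ X) P from
        (hX.sub (integrable_const s)).pos_part)
    exact h
  have hfin : ∀ s : ℝ, ∫⁻ x, ENNReal.ofReal (max (x - s) 0) ∂μ < ⊤ := by
    intro s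
    exact (hasFiniteIntegral_iff_ofReal
      (Eventually.of_forall fun x : ℝ => le_max_right (x - s) 0)).mp
      (hXint s).hasFiniteIntegral
  -- integrability of the positive-part quantile function on (0,1)
  have hg_int : ∀ s : ℝ,
      IntegrableOn (fun u => max (qf μ u - s) 0) (Ioo (0:ℝ) 1) volume := by
    intro s
    refine ⟨((hqm.sub aemeasurable_const).max aemeasurable_const).aestronglyMeasurable, ?_⟩
    refine (hasFiniteIntegral_iff_ofReal
      (Eventually.of_forall fun u : ℝ => le_max_right (qf μ u - s) 0)).mpr ?_
    rw [key μ s]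
    exact hfin s
  -- the crucial expectation identity
  have hE : ∀ s : ℝ,
      ∫ u in Ioo (0:ℝ) 1, max (qf μ u - s) 0 = ∫ ω, max (X ω - s) 0 ∂P := by
    intro s
    have hm : Measurable (fun x : ℝ => max (x - s) 0) := by fun_prop
    have hgm : AEMeasurable (fun u => max (qf μ u - s) 0) (volume.restrict (Ioo (0:ℝ) 1)) :=
      (hqm.sub aemeasurable_const).max aemeasurable_const
    have h1 : ∫ ω, max (X ω - s) 0 ∂P = ∫ x, max (x - s) 0 ∂μ :=
      (integral_map hX.aemeasurable hm.aestronglyMeasurable).symm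
    have h2 := integral_eq_lintegral_of_nonneg_ae (μ := volume.restrict (Ioo (0:ℝ) 1))
      (f := fun u => max (qf μ u - s) 0)
      (Eventually.of_forall fun u => le_max_right (qf μ u - s) 0) hgm.aestronglyMeasurable
    have h3 := integral_eq_lintegral_of_nonneg_ae (μ := μ) (f := fun x => max (x - s) 0)
      (Eventually.of_forall fun x => le_max_right (x - s) 0) hm.aestronglyMeasurable
    rw [h1, h2, h3, key μ s]
  set s₀ : ℝ := qf μ α with hs₀
  -- qf is integrable on (α, 1)
  have hsub01 : Ioo α 1 ⊆ Ioo (0:ℝ) 1 := Ioo_subset_Ioo hα.1.le le_rfl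
  have hg_intα : ∀ s : ℝ,
      IntegrableOn (fun u => max (qf μ u - s) 0) (Ioo α 1) volume :=
    fun s => (hg_int s).mono_set hsub01
  have hq_eq : ∀ u ∈ Ioo α 1, qf μ u = s₀ + max (qf μ u - s₀) 0 := by
    intro u hu
    have hu' : u ∈ Ioo (0:ℝ) 1 := hsub01 hu
    have h : s₀ ≤ qf μ u := qf_monoOn μ hα hu' hu.1.le
    rw [max_eq_left (by linarith)]
    ring
  have hq_int : IntegrableOn (qf μ) (Ioo α 1) volume := by
    refine ((integrable_const s₀).add (hg_intα s₀)).congr ?_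
    rw [Filter.EventuallyEq, ae_restrict_iff' measurableSet_Ioo]
    exact Eventually.of_forall fun u hu => (hq_eq u hu).symm
  have hconst_int : ∀ s : ℝ, IntegrableOn (fun _ => s) (Ioo α 1) volume := by
    intro s
    refine (integrableOn_const_iff enorm_ne_top).mpr (Or.inr ?_)
    rw [Real.volume_Ioo]
    exact ENNReal.ofReal_lt_top
  -- the interval integral in AVaR
  have hI : ∫ t in α..1, VaR P t X = ∫ u in Ioo α 1, qf μ u := by
    rw [intervalIntegral.integral_of_le hα.2.le]
    simp_rw [hVaR]
    exact integral_Ioc_eq_integral_Ioo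
  have hvol : (volume (Ioo α (1:ℝ))).toReal = 1 - α := by
    rw [Real.volume_Ioo, ENNReal.toReal_ofReal (by linarith)]
  have hsubint : ∀ s : ℝ,
      ∫ u in Ioo α 1, (qf μ u - s) = (∫ u in Ioo α 1, qf μ u) - s * (1 - α) := by
    intro s
    rw [integral_sub hq_int (hconst_int s), setIntegral_const, measureReal_def, hvol, smul_eq_mul,
      mul_comm]
  have hcinv : (1 - α)⁻¹ * (1 - α) = 1 := inv_mul_cancel₀ (ne_of_gt hα1)
  have hcpos : (0:ℝ) < (1 - α)⁻¹ := inv_pos.mpr hα1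
  have hAVaR : AVaR P α X = (1 - α)⁻¹ * ∫ u in Ioo α 1, qf μ u := by
    rw [AVaR, hI]
  constructor
  · -- the minimum is attained at s₀ = VaR_α(X)
    refine ⟨s₀, ?_⟩
    show s₀ + (1 - α)⁻¹ * ∫ ω, max (X ω - s₀) 0 ∂P = AVaR P α X
    have hkey0 : ∫ u in Ioo (0:ℝ) 1, max (qf μ u - s₀) 0
        = ∫ u in Ioo α 1, (qf μ u - s₀) := by
      have h1 : EqOn (fun u => max (qf μ u - s₀) 0)
          ((Ico α 1).indicator (fun u => qf μ u - s₀)) (Ioo (0:ℝ) 1) := by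
        intro u hu
        by_cases hcase : α ≤ u
        · have hu01 : u ∈ Ioo (0:ℝ) 1 := ⟨hα.1.trans_le hcase, hu.2⟩
          have h : s₀ ≤ qf μ u := qf_monoOn μ hα hu01 hcase
          have hmem : u ∈ Ico α 1 := ⟨hcase, hu.2⟩
          rw [Set.indicator_of_mem hmem]
          exact max_eq_left (by linarith)
        · push_neg at hcase
          have h : qf μ u ≤ s₀ := qf_monoOn μ hu hα hcase.le
          have hnot : u ∉ Ico α 1 := fun hmem => (not_le.mpr hcase) hmem.1
          rw [Set.indicator_of_notMem hnot]
          exact max_eq_right (by linarith)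
      have hsubIco : Ico α 1 ⊆ Ioo (0:ℝ) 1 := fun u hu => ⟨hα.1.trans_le hu.1, hu.2⟩
      rw [setIntegral_congr_fun measurableSet_Ioo h1,
        setIntegral_indicator measurableSet_Ico,
        Set.inter_eq_self_of_subset_right hsubIco]
      exact integral_Ico_eq_integral_Ioo
    have hEs₀ : ∫ ω, max (X ω - s₀) 0 ∂P
        = (∫ u in Ioo α 1, qf μ u) - s₀ * (1 - α) := by
      rw [← hE s₀, hkey0, hsubint s₀]
    rw [hEs₀, hAVaR]
    have : (1 - α)⁻¹ * ((∫ u in Ioo α 1, qf μ u) - s₀ * (1 - α))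
        = (1 - α)⁻¹ * (∫ u in Ioo α 1, qf μ u) - ((1 - α)⁻¹ * (1 - α)) * s₀ := by
      ring
    rw [this, hcinv]
    ring
  · -- lower bound
    rintro y ⟨s, rfl⟩
    show AVaR P α X ≤ s + (1 - α)⁻¹ * ∫ ω, max (X ω - s) 0 ∂P
    have h1 : (∫ u in Ioo α 1, qf μ u) - s * (1 - α) ≤ ∫ ω, max (X ω - s) 0 ∂P := by
      rw [← hsubint s, ← hE s]
      calc ∫ u in Ioo α 1, (qf μ u - s)
          ≤ ∫ u in Ioo α 1, max (qf μ u - s) 0 :=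
            integral_mono (hq_int.sub (hconst_int s)) (hg_intα s)
              (fun u => le_max_left _ _)
        _ ≤ ∫ u in Ioo (0:ℝ) 1, max (qf μ u - s) 0 :=
            setIntegral_mono_set (hg_int s)
              (Eventually.of_forall fun u => le_max_right _ _)
              (HasSubset.Subset.eventuallyLE hsub01)
    rw [hAVaR]
    have h2 := mul_le_mul_of_nonneg_left h1 hcpos.le
    have h3 : (1 - α)⁻¹ * ((∫ u in Ioo α 1, qf μ u) - s * (1 - α))
        = (1 - α)⁻¹ * (∫ u in Ioo α 1, qf μ u) - ((1 - α)⁻¹ * (1 - α)) * s := by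
      ring
    rw [h3, hcinv] at h2
    linarith
end

section
/- Let X be a real-valued integrable random variable on a probability space (Ω, F, P) and let α ∈ (0,1). Then the function s ↦ s + (1/(1-α)) · E[(X - s)^+] attains its minimum over s ∈ ℝ at s = VaR_α(X); in particular AVaR_α(X) = VaR_α(X) + (1/(1-α)) · E[(X - VaR_α(X))^+]. -/
open MeasureTheory

section Helpers

open Set Filter ProbabilityTheory

set_option linter.unusedSectionVars false

/-- The (generalized inverse) quantile function of a measure on `ℝ`. -/
noncomputable def RUqf (μ : Measure ℝ) (t : ℝ) : ℝ := sInf {x | t ≤ cdf μ x}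

variable {μ : Measure ℝ} [IsProbabilityMeasure μ]

lemma RUqf_nonempty {t : ℝ} (ht : t < 1) : {x | t ≤ cdf μ x}.Nonempty := by
  have h := tendsto_cdf_atTop (μ := μ)
  have : ∀ᶠ x in atTop, t < cdf μ x := h.eventually (eventually_gt_nhds ht)
  obtain ⟨x, hx⟩ := this.exists
  exact ⟨x, hx.le⟩

lemma RUqf_bdd {t : ℝ} (ht : 0 < t) : BddBelow {x | t ≤ cdf μ x} := by
  have h := tendsto_cdf_atBot (μ := μ)
  have : ∀ᶠ x in atBot, cdf μ x < t := h.eventually (eventually_lt_nhds ht)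
  obtain ⟨y, hy⟩ := this.exists
  refine ⟨y, fun x hx => ?_⟩
  by_contra hxy
  exact absurd (le_trans hx ((cdf μ).mono (le_of_not_ge hxy))) (not_le.2 hy)

lemma RUqf_le_iff {t x : ℝ} (ht : t ∈ Ioo (0:ℝ) 1) : RUqf μ t ≤ x ↔ t ≤ cdf μ x := by
  constructor
  · intro h
    have hq : t ≤ cdf μ (RUqf μ t) := by
      have key : ∀ y > RUqf μ t, t ≤ cdf μ y := by
        intro y hy
        obtain ⟨z, hz, hzy⟩ := (csInf_lt_iff (RUqf_bdd ht.1) (RUqf_nonempty ht.2)).1 hy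
        exact le_trans hz ((cdf μ).mono hzy.le)
      have hrc := (cdf μ).right_continuous (RUqf μ t)
      have : Tendsto (cdf μ) (nhdsWithin (RUqf μ t) (Ioi (RUqf μ t)))
          (nhds (cdf μ (RUqf μ t))) :=
        hrc.tendsto.mono_left (nhdsWithin_mono _ Ioi_subset_Ici_self)
      refine ge_of_tendsto this ?_
      filter_upwards [self_mem_nhdsWithin] with y hy using key y hy
    exact le_trans hq ((cdf μ).mono h)
  · intro h
    exact csInf_le (RUqf_bdd ht.1) h

lemma RUcdf_lt_of_lt_RUqf {t x : ℝ} (ht : t ∈ Ioo (0:ℝ) 1) (hx : x < RUqf μ t) :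
    cdf μ x < t := by
  by_contra h
  exact absurd ((RUqf_le_iff ht).2 (le_of_not_gt h)) (not_le.2 hx)

lemma RUqf_monoOn : MonotoneOn (RUqf μ) (Ioo (0:ℝ) 1) := by
  intro s hs t ht hst
  exact le_csInf (RUqf_nonempty ht.2) fun x hx => csInf_le (RUqf_bdd hs.1) (le_trans hst hx)

/-- layer cake on the quantile side -/
lemma RU_lintegral_qf_eq {α : ℝ} (hα : α ∈ Ioo (0:ℝ) 1) :
    ∫⁻ t in Ioo α 1, ENNReal.ofReal (RUqf μ t - RUqf μ α)
      = ∫⁻ u in Ioi (0:ℝ), ENNReal.ofReal (1 - cdf μ (RUqf μ α + u)) := by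
  have hsub : Ioo α 1 ⊆ Ioo (0:ℝ) 1 := Ioo_subset_Ioo hα.1.le le_rfl
  have hmono : MonotoneOn (fun t => RUqf μ t - RUqf μ α) (Ioo α 1) := fun s hs t ht hst =>
    sub_le_sub_right (RUqf_monoOn (hsub hs) (hsub ht) hst) _
  have hmble : AEMeasurable (fun t => RUqf μ t - RUqf μ α) (volume.restrict (Ioo α 1)) :=
    aemeasurable_restrict_of_monotoneOn measurableSet_Ioo hmono
  have hnn : 0 ≤ᵐ[volume.restrict (Ioo α 1)] fun t => RUqf μ t - RUqf μ α := by
    rw [EventuallyLE, ae_restrict_iff' measurableSet_Ioo]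
    exact ae_of_all _ fun t ht => sub_nonneg.2 (RUqf_monoOn hα (hsub ht) ht.1.le)
  rw [lintegral_eq_lintegral_meas_lt _ hnn hmble]
  refine setLIntegral_congr_fun_ae measurableSet_Ioi (ae_of_all _ fun u hu => ?_)
  have hFq : α ≤ cdf μ (RUqf μ α) := (RUqf_le_iff hα).1 le_rfl
  have hF : α ≤ cdf μ (RUqf μ α + u) :=
    le_trans hFq ((cdf μ).mono (by linarith [mem_Ioi.1 hu]))
  have hset : {t | u < RUqf μ t - RUqf μ α} ∩ Ioo α 1 = Ioo (cdf μ (RUqf μ α + u)) 1 := by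
    ext t
    simp only [mem_inter_iff, mem_setOf_eq, mem_Ioo]
    constructor
    · rintro ⟨h1, h2, h3⟩
      refine ⟨?_, h3⟩
      by_contra h4
      have := (RUqf_le_iff (hsub ⟨h2, h3⟩)).2 (le_of_not_gt h4)
      linarith
    · rintro ⟨h1, h2⟩
      have ht : t ∈ Ioo (0:ℝ) 1 := ⟨lt_of_le_of_lt (le_trans hα.1.le hF) h1, h2⟩
      have : ¬ RUqf μ t ≤ RUqf μ α + u := fun hle =>
        absurd ((RUqf_le_iff ht).1 hle) (not_le.2 h1)
      exact ⟨by linarith [lt_of_not_ge this], lt_of_le_of_lt hF h1, h2⟩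
  rw [Measure.restrict_apply' measurableSet_Ioo, hset, Real.volume_Ioo]

variable {Ω : Type*} [MeasurableSpace Ω] {P : Measure Ω} [IsProbabilityMeasure P]
  {X : Ω → ℝ}

lemma RU_map_Iic (hXm : Measurable X) (x : ℝ) :
    (P.map X) (Iic x) = P {ω | X ω ≤ x} := by
  rw [Measure.map_apply hXm measurableSet_Iic]; rfl

lemma RU_cdf_map_eq (hXm : Measurable X) (x : ℝ) :
    cdf (P.map X) x = (P {ω | X ω ≤ x}).toReal := by
  have : IsProbabilityMeasure (P.map X) := Measure.isProbabilityMeasure_map hXm.aemeasurable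
  rw [cdf_eq_real, measureReal_def, RU_map_Iic hXm]

lemma RU_VaR_eq_qf (hXm : Measurable X) (t : ℝ) :
    VaR P t X = RUqf (P.map X) t := by
  unfold VaR RUqf
  congr 1
  ext x
  rw [mem_setOf_eq, mem_setOf_eq, RU_cdf_map_eq hXm]

lemma RU_meas_gt_le (hXm : Measurable X) {q α : ℝ} (hα : α ∈ Ioo (0:ℝ) 1)
    (h : α ≤ (P {ω | X ω ≤ q}).toReal) : (P {ω | q < X ω}).toReal ≤ 1 - α := by
  have hms : MeasurableSet {ω | X ω ≤ q} := hXm measurableSet_Iic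
  have hc : {ω | q < X ω} = {ω | X ω ≤ q}ᶜ := by ext ω; simp [not_le]
  have h1 : ENNReal.ofReal α ≤ P {ω | X ω ≤ q} :=
    ENNReal.ofReal_le_of_le_toReal h
  have h2 : P {ω | q < X ω} ≤ ENNReal.ofReal (1 - α) := by
    rw [hc, measure_compl hms (measure_ne_top P _), measure_univ,
      ENNReal.ofReal_sub _ hα.1.le, ENNReal.ofReal_one]
    exact tsub_le_tsub_left h1 1
  calc (P {ω | q < X ω}).toReal ≤ (ENNReal.ofReal (1 - α)).toReal :=
        ENNReal.toReal_mono ENNReal.ofReal_ne_top h2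
    _ = 1 - α := ENNReal.toReal_ofReal (by linarith [hα.2])

lemma RU_meas_ge_ge (hXm : Measurable X) {q α : ℝ} (hα : α ∈ Ioo (0:ℝ) 1)
    (h : ∀ x < q, (P {ω | X ω ≤ x}).toReal < α) : 1 - α ≤ (P {ω | q ≤ X ω}).toReal := by
  have hlt : P {ω | X ω < q} ≤ ENNReal.ofReal α := by
    have hU : {ω | X ω < q} = ⋃ n : ℕ, {ω | X ω ≤ q - ((n:ℝ)+1)⁻¹} := by
      ext ω
      simp only [mem_setOf_eq, mem_iUnion]
      constructor
      · intro hw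
        obtain ⟨n, hn⟩ := exists_nat_one_div_lt (sub_pos.2 hw)
        refine ⟨n, ?_⟩
        rw [one_div] at hn
        linarith
      · rintro ⟨n, hn⟩
        have hp : (0:ℝ) < ((n:ℝ)+1)⁻¹ := by positivity
        linarith
    rw [hU]
    have hmono : Monotone fun n : ℕ => {ω | X ω ≤ q - ((n:ℝ)+1)⁻¹} := by
      intro m n hmn ω hw
      have hcast : ((m:ℝ)) ≤ (n:ℝ) := Nat.cast_le.2 hmn
      have : ((n:ℝ)+1)⁻¹ ≤ ((m:ℝ)+1)⁻¹ := by
        apply inv_anti₀ (by positivity)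
        linarith
      simp only [mem_setOf_eq] at *
      linarith
    rw [hmono.directed_le.measure_iUnion]
    refine iSup_le fun n => ?_
    have hp : (0:ℝ) < ((n:ℝ)+1)⁻¹ := by positivity
    have hx := h (q - ((n:ℝ)+1)⁻¹) (by linarith)
    calc P {ω | X ω ≤ q - ((n:ℝ)+1)⁻¹}
        = ENNReal.ofReal ((P {ω | X ω ≤ q - ((n:ℝ)+1)⁻¹}).toReal) :=
          (ENNReal.ofReal_toReal (measure_ne_top P _)).symm
      _ ≤ ENNReal.ofReal α := ENNReal.ofReal_le_ofReal hx.le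
  have hc : {ω | q ≤ X ω} = {ω | X ω < q}ᶜ := by ext ω; simp [not_lt]
  have h2 : ENNReal.ofReal (1 - α) ≤ P {ω | q ≤ X ω} := by
    rw [hc, measure_compl (show MeasurableSet {ω | X ω < q} from hXm measurableSet_Iio)
      (measure_ne_top P _), measure_univ, ENNReal.ofReal_sub _ hα.1.le, ENNReal.ofReal_one]
    exact tsub_le_tsub_left hlt 1
  calc 1 - α = (ENNReal.ofReal (1 - α)).toReal :=
        (ENNReal.toReal_ofReal (by linarith [hα.2])).symm
    _ ≤ (P {ω | q ≤ X ω}).toReal := ENNReal.toReal_mono (measure_ne_top P _) h2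

lemma RU_int_ineq_ge (hX : Integrable X P) (hXm : Measurable X) {q s : ℝ} (hqs : q ≤ s) :
    (∫ ω, max (X ω - q) 0 ∂P) ≤
      (∫ ω, max (X ω - s) 0 ∂P) + (P {ω | q < X ω}).toReal * (s - q) := by
  have hms : MeasurableSet {ω | q < X ω} := hXm measurableSet_Ioi
  have hint1 : Integrable (fun ω => max (X ω - s) 0) P := (hX.sub (integrable_const s)).pos_part
  have hind : Integrable (fun ω => ({ω | q < X ω}).indicator (fun _ => s - q) ω) P :=
    (integrable_const (s - q)).indicator hms
  have hpt : ∀ ω, max (X ω - q) 0 ≤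
      max (X ω - s) 0 + ({ω | q < X ω}).indicator (fun _ => s - q) ω := by
    intro ω
    by_cases h1 : q < X ω
    · simp only [indicator_apply, mem_setOf_eq, if_pos h1]
      rcases le_or_gt (X ω) s with h2 | h2
      · have : max (X ω - q) 0 = X ω - q := max_eq_left (by linarith)
        rw [this]
        have : (0:ℝ) ≤ max (X ω - s) 0 := le_max_right _ _
        linarith
      · rw [max_eq_left (by linarith : (0:ℝ) ≤ X ω - q), max_eq_left (by linarith)]
        linarith
    · simp only [indicator_apply, mem_setOf_eq, if_neg h1]
      push_neg at h1
      rw [max_eq_right (by linarith : X ω - q ≤ 0)]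
      simp [le_max_right]
  calc (∫ ω, max (X ω - q) 0 ∂P)
      ≤ ∫ ω, (max (X ω - s) 0 + ({ω | q < X ω}).indicator (fun _ => s - q) ω) ∂P :=
        integral_mono (hX.sub (integrable_const q)).pos_part (hint1.add hind) hpt
    _ = (∫ ω, max (X ω - s) 0 ∂P) + (P {ω | q < X ω}).toReal * (s - q) := by
        rw [integral_add hint1 hind, integral_indicator_const _ hms, smul_eq_mul, measureReal_def]

lemma RU_int_ineq_le (hX : Integrable X P) (hXm : Measurable X) {q s : ℝ} (hsq : s ≤ q) :
    (∫ ω, max (X ω - q) 0 ∂P) + (P {ω | q ≤ X ω}).toReal * (q - s) ≤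
      (∫ ω, max (X ω - s) 0 ∂P) := by
  have hms : MeasurableSet {ω | q ≤ X ω} := hXm measurableSet_Ici
  have hint1 : Integrable (fun ω => max (X ω - q) 0) P := (hX.sub (integrable_const q)).pos_part
  have hind : Integrable (fun ω => ({ω | q ≤ X ω}).indicator (fun _ => q - s) ω) P :=
    (integrable_const (q - s)).indicator hms
  have hpt : ∀ ω, max (X ω - q) 0 + ({ω | q ≤ X ω}).indicator (fun _ => q - s) ω ≤
      max (X ω - s) 0 := by
    intro ω
    by_cases h1 : q ≤ X ω
    · simp only [indicator_apply, mem_setOf_eq, if_pos h1]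
      rw [max_eq_left (by linarith : (0:ℝ) ≤ X ω - q),
        max_eq_left (by linarith : (0:ℝ) ≤ X ω - s)]
      linarith
    · simp only [indicator_apply, mem_setOf_eq, if_neg h1]
      push_neg at h1
      rw [max_eq_right (by linarith : X ω - q ≤ 0)]
      simp [le_max_right]
  calc (∫ ω, max (X ω - q) 0 ∂P) + (P {ω | q ≤ X ω}).toReal * (q - s)
      = ∫ ω, (max (X ω - q) 0 + ({ω | q ≤ X ω}).indicator (fun _ => q - s) ω) ∂P := by
        rw [integral_add hint1 hind, integral_indicator_const _ hms, smul_eq_mul, measureReal_def]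
    _ ≤ ∫ ω, max (X ω - s) 0 ∂P :=
        integral_mono (hint1.add hind) (hX.sub (integrable_const s)).pos_part hpt

lemma RU_meas_gt_eq (hXm : Measurable X) (x : ℝ) :
    P {ω | x < X ω} = ENNReal.ofReal (1 - cdf (P.map X) x) := by
  have : IsProbabilityMeasure (P.map X) := Measure.isProbabilityMeasure_map hXm.aemeasurable
  have hc : {ω | x < X ω} = {ω | X ω ≤ x}ᶜ := by ext ω; simp [not_le]
  rw [hc, measure_compl (show MeasurableSet {ω | X ω ≤ x} from hXm measurableSet_Iic)
    (measure_ne_top P _), measure_univ,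
    RU_cdf_map_eq hXm, ENNReal.ofReal_sub _ ENNReal.toReal_nonneg, ENNReal.ofReal_one,
    ENNReal.ofReal_toReal (measure_ne_top P _)]

lemma RU_lintegral_pos_part_eq (hXm : Measurable X) (q : ℝ) :
    ∫⁻ ω, ENNReal.ofReal (max (X ω - q) 0) ∂P
      = ∫⁻ u in Ioi (0:ℝ), ENNReal.ofReal (1 - cdf (P.map X) (q + u)) := by
  have hmble : AEMeasurable (fun ω => max (X ω - q) 0) P :=
    ((hXm.sub measurable_const).max measurable_const).aemeasurable
  rw [lintegral_eq_lintegral_meas_lt P (f := fun ω => max (X ω - q) 0)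
    (ae_of_all _ fun ω => le_max_right _ _) hmble]
  refine setLIntegral_congr_fun_ae measurableSet_Ioi (ae_of_all _ fun u hu => ?_)
  have hset : {ω | u < max (X ω - q) 0} = {ω | q + u < X ω} := by
    ext ω
    simp only [mem_setOf_eq, lt_max_iff]
    constructor
    · rintro (h | h)
      · linarith
      · exact absurd h (not_lt.2 (le_of_lt hu))
    · intro h; left; linarith
  rw [hset, RU_meas_gt_eq hXm]

/-- The key lemma, assuming `X` is genuinely measurable. -/
lemma RU_key (P : Measure Ω) [IsProbabilityMeasure P]
    (X : Ω → ℝ) (hX : Integrable X P) (hXm : Measurable X)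
    (α : ℝ) (hα : α ∈ Set.Ioo (0 : ℝ) 1) :
    (∀ s : ℝ,
      VaR P α X + (1 - α)⁻¹ * ∫ ω, max (X ω - VaR P α X) 0 ∂P ≤
        s + (1 - α)⁻¹ * ∫ ω, max (X ω - s) 0 ∂P) ∧
    AVaR P α X = VaR P α X + (1 - α)⁻¹ * ∫ ω, max (X ω - VaR P α X) 0 ∂P := by
  have hmap : IsProbabilityMeasure (P.map X) := Measure.isProbabilityMeasure_map hXm.aemeasurable
  set μ := P.map X with hμ
  set q : ℝ := VaR P α X with hqdef
  have hq_qf : q = RUqf μ α := RU_VaR_eq_qf hXm α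
  have h1α : (0:ℝ) < 1 - α := by linarith [hα.2]
  have hcpos : (0:ℝ) ≤ (1 - α)⁻¹ := by positivity
  -- cdf facts at q
  have hFq : α ≤ (P {ω | X ω ≤ q}).toReal := by
    rw [← RU_cdf_map_eq hXm, ← hμ, hq_qf]
    exact (RUqf_le_iff hα).1 le_rfl
  have hFlt : ∀ x < q, (P {ω | X ω ≤ x}).toReal < α := by
    intro x hx
    rw [← RU_cdf_map_eq hXm, ← hμ]
    exact RUcdf_lt_of_lt_RUqf hα (hq_qf ▸ hx)
  constructor
  · -- minimality
    intro s
    rcases le_or_gt q s with hqs | hsq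
    · have hineq := RU_int_ineq_ge hX hXm hqs
      have hp : (P {ω | q < X ω}).toReal ≤ 1 - α := RU_meas_gt_le hXm hα hFq
      have hp0 : (0:ℝ) ≤ (P {ω | q < X ω}).toReal := ENNReal.toReal_nonneg
      have key : (1 - α)⁻¹ * ((P {ω | q < X ω}).toReal * (s - q)) ≤ s - q := by
        have h1 : (P {ω | q < X ω}).toReal * (s - q) ≤ (1 - α) * (s - q) := by
          apply mul_le_mul_of_nonneg_right hp (by linarith)
        calc (1 - α)⁻¹ * ((P {ω | q < X ω}).toReal * (s - q))
            ≤ (1 - α)⁻¹ * ((1 - α) * (s - q)) := by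
              apply mul_le_mul_of_nonneg_left h1 hcpos
          _ = s - q := by field_simp
      have := mul_le_mul_of_nonneg_left hineq hcpos
      rw [mul_add] at this
      linarith
    · have hineq := RU_int_ineq_le hX hXm hsq.le
      have hp : 1 - α ≤ (P {ω | q ≤ X ω}).toReal := RU_meas_ge_ge hXm hα hFlt
      have key : q - s ≤ (1 - α)⁻¹ * ((P {ω | q ≤ X ω}).toReal * (q - s)) := by
        have h1 : (1 - α) * (q - s) ≤ (P {ω | q ≤ X ω}).toReal * (q - s) := by
          apply mul_le_mul_of_nonneg_right hp (by linarith)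
        calc q - s = (1 - α)⁻¹ * ((1 - α) * (q - s)) := by field_simp
          _ ≤ (1 - α)⁻¹ * ((P {ω | q ≤ X ω}).toReal * (q - s)) := by
              apply mul_le_mul_of_nonneg_left h1 hcpos
      have := mul_le_mul_of_nonneg_left hineq hcpos
      rw [mul_add] at this
      linarith
  · -- the AVaR representation
    have hIoo : Set.Ioo α 1 ⊆ Set.Ioo (0:ℝ) 1 := Set.Ioo_subset_Ioo hα.1.le le_rfl
    set I : ENNReal := ∫⁻ ω, ENNReal.ofReal (max (X ω - q) 0) ∂P with hI
    have hintpos : Integrable (fun ω => max (X ω - q) 0) P :=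
      (hX.sub (integrable_const q)).pos_part
    have hIfin : I < ⊤ := hintpos.lintegral_lt_top
    have hchain : ∫⁻ t in Set.Ioo α 1, ENNReal.ofReal (RUqf μ t - q) = I := by
      rw [hq_qf, RU_lintegral_qf_eq hα, hI, RU_lintegral_pos_part_eq hXm, ← hμ, ← hq_qf]
    -- quantile-side function
    have hmono : MonotoneOn (fun t => RUqf μ t - q) (Set.Ioo α 1) := fun a ha b hb hab =>
      sub_le_sub_right (RUqf_monoOn (hIoo ha) (hIoo hb) hab) _
    have hmble : AEMeasurable (fun t => RUqf μ t - q) (volume.restrict (Set.Ioo α 1)) :=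
      aemeasurable_restrict_of_monotoneOn measurableSet_Ioo hmono
    have hnn : 0 ≤ᵐ[volume.restrict (Set.Ioo α 1)] fun t => RUqf μ t - q := by
      rw [Filter.EventuallyLE, ae_restrict_iff' measurableSet_Ioo]
      exact ae_of_all _ fun t ht => sub_nonneg.2 (hq_qf ▸ RUqf_monoOn hα (hIoo ht) ht.1.le)
    have hg_int : Integrable (fun t => RUqf μ t - q) (volume.restrict (Set.Ioo α 1)) := by
      refine ⟨hmble.aestronglyMeasurable, ?_⟩
      rw [hasFiniteIntegral_iff_ofReal hnn, hchain]
      exact hIfin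
    have hg_int_eq : ∫ t in Set.Ioo α 1, (RUqf μ t - q) = I.toReal := by
      rw [integral_eq_lintegral_of_nonneg_ae hnn hmble.aestronglyMeasurable, hchain]
    have hE_eq : ∫ ω, max (X ω - q) 0 ∂P = I.toReal := by
      rw [integral_eq_lintegral_of_nonneg_ae (f := fun ω => max (X ω - q) 0)
        (ae_of_all _ fun ω => le_max_right _ _) hintpos.aestronglyMeasurable, hI]
    have hvol : (volume (Set.Ioo α 1)).toReal = 1 - α := by
      rw [Real.volume_Ioo, ENNReal.toReal_ofReal (by linarith)]
    have hsplit : ∫ t in Set.Ioo α 1, RUqf μ t = I.toReal + (1 - α) * q := by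
      have : ∀ t, RUqf μ t = (RUqf μ t - q) + q := fun t => by ring
      rw [show (fun t => RUqf μ t) = fun t => (RUqf μ t - q) + q from funext this]
      rw [integral_add hg_int (integrable_const q), hg_int_eq, setIntegral_const,
        smul_eq_mul, measureReal_def, hvol]
    have hVaRqf : ∀ t, VaR P t X = RUqf μ t := RU_VaR_eq_qf hXm
    have hIoc : ∫ t in α..1, VaR P t X = ∫ t in Set.Ioo α 1, RUqf μ t := by
      rw [intervalIntegral.integral_of_le hα.2.le]
      simp_rw [hVaRqf]
      exact integral_Ioc_eq_integral_Ioo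
    unfold AVaR
    rw [hIoc, hsplit, hE_eq]
    field_simp
    ring

end Helpers

/-- The function `s ↦ s + (1/(1-α)) E[(X - s)⁺]` attains its minimum over `s ∈ ℝ`
at `s = VaR_α(X)`; in particular `AVaR_α(X) = VaR_α(X) + (1/(1-α)) E[(X - VaR_α(X))⁺]`. -/
theorem avar_min_attained_at_var
    {Ω : Type*} [MeasurableSpace Ω] (P : Measure Ω) [IsProbabilityMeasure P]
    (X : Ω → ℝ) (hX : Integrable X P) (α : ℝ) (hα : α ∈ Set.Ioo (0 : ℝ) 1) :
    (∀ s : ℝ,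
      VaR P α X + (1 - α)⁻¹ * ∫ ω, max (X ω - VaR P α X) 0 ∂P ≤
        s + (1 - α)⁻¹ * ∫ ω, max (X ω - s) 0 ∂P) ∧
    AVaR P α X = VaR P α X + (1 - α)⁻¹ * ∫ ω, max (X ω - VaR P α X) 0 ∂P := by
  -- replace `X` by a measurable representative
  obtain ⟨Y, hYm, hXY⟩ : ∃ Y, Measurable Y ∧ X =ᵐ[P] Y :=
    ⟨hX.aemeasurable.mk X, hX.aemeasurable.measurable_mk, hX.aemeasurable.ae_eq_mk⟩
  have hY : Integrable Y P := hX.congr hXY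
  have hmeas : ∀ x : ℝ, P {ω | X ω ≤ x} = P {ω | Y ω ≤ x} := by
    intro x
    apply measure_congr
    filter_upwards [hXY] with ω h
    show (X ω ≤ x) = (Y ω ≤ x)
    rw [h]
  have hVaR : ∀ t : ℝ, VaR P t X = VaR P t Y := by
    intro t
    unfold VaR
    congr 1
    ext x
    rw [Set.mem_setOf_eq, Set.mem_setOf_eq, hmeas x]
  have hAVaR : AVaR P α X = AVaR P α Y := by
    unfold AVaR
    congr 1
    apply intervalIntegral.integral_congr
    intro t _
    exact hVaR t
  have hInt : ∀ s : ℝ, (∫ ω, max (X ω - s) 0 ∂P) = ∫ ω, max (Y ω - s) 0 ∂P := by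
    intro s
    apply integral_congr_ae
    filter_upwards [hXY] with ω h
    rw [h]
  obtain ⟨h1, h2⟩ := RU_key P Y hY hYm α hα
  constructor
  · intro s
    rw [hVaR α, hInt s, hInt (VaR P α Y)]
    exact h1 s
  · rw [hAVaR, hVaR α, hInt (VaR P α Y)]
    exact h2
end

section
/- Let X and Y be real-valued integrable random variables on a probability space (Ω, F, P), α ∈ (0,1), and λ ∈ (0,1). Then AVaR_α(λX + (1-λ)Y) ≤ λ·AVaR_α(X) + (1-λ)·AVaR_α(Y) (convexity of the Average-Value-at-Risk). -/
open MeasureTheory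

section AVaRHelpers

open Set ProbabilityTheory Filter Topology

variable {Ω : Type*} [MeasurableSpace Ω] {P : Measure Ω} [IsProbabilityMeasure P] {Z : Ω → ℝ}

private lemma meas_le_eq (hZ : AEMeasurable Z P) (x : ℝ) :
    P {ω | Z ω ≤ x} = ENNReal.ofReal (cdf (P.map Z) x) := by
  have : IsProbabilityMeasure (P.map Z) := Measure.isProbabilityMeasure_map hZ
  rw [ofReal_cdf, Measure.map_apply_of_aemeasurable hZ measurableSet_Iic]
  rfl

private lemma toReal_meas_le (hZ : AEMeasurable Z P) (x : ℝ) :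
    (P {ω | Z ω ≤ x}).toReal = cdf (P.map Z) x := by
  rw [meas_le_eq hZ, ENNReal.toReal_ofReal (cdf_nonneg _ _)]

private lemma VaR_eq_sInf (hZ : AEMeasurable Z P) (t : ℝ) :
    VaR P t Z = sInf {x | t ≤ cdf (P.map Z) x} := by
  unfold VaR
  congr 1
  ext x
  rw [Set.mem_setOf_eq, Set.mem_setOf_eq, toReal_meas_le hZ]

private lemma var_set_nonempty (hZ : AEMeasurable Z P) {t : ℝ} (ht1 : t < 1) :
    {x | t ≤ cdf (P.map Z) x}.Nonempty := by
  have : IsProbabilityMeasure (P.map Z) := Measure.isProbabilityMeasure_map hZ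
  have h := (tendsto_cdf_atTop (P.map Z)).eventually (eventually_ge_nhds ht1)
  exact h.exists

private lemma var_set_bddBelow (hZ : AEMeasurable Z P) {t : ℝ} (ht : 0 < t) :
    BddBelow {x | t ≤ cdf (P.map Z) x} := by
  have : IsProbabilityMeasure (P.map Z) := Measure.isProbabilityMeasure_map hZ
  have h := (tendsto_cdf_atBot (P.map Z)).eventually (eventually_lt_nhds ht)
  obtain ⟨b, hb⟩ := h.exists
  refine ⟨b, fun x hx => ?_⟩
  by_contra hbx
  push_neg at hbx
  exact absurd (le_trans hx (monotone_cdf _ hbx.le)) (not_le.2 hb)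

/-- The Galois-type correspondence between `VaR` and the cdf. -/
private lemma VaR_le_iff (hZ : AEMeasurable Z P) {t : ℝ} (ht : t ∈ Set.Ioo (0:ℝ) 1) (u : ℝ) :
    VaR P t Z ≤ u ↔ t ≤ cdf (P.map Z) u := by
  rw [VaR_eq_sInf hZ]
  constructor
  · intro h
    have hv : ∀ᶠ v in 𝓝[>] u, t ≤ cdf (P.map Z) v := by
      filter_upwards [self_mem_nhdsWithin] with v hv
      obtain ⟨x, hx, hxv⟩ :=
        (csInf_lt_iff (var_set_bddBelow hZ ht.1) (var_set_nonempty hZ ht.2)).mp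
          (lt_of_le_of_lt h hv)
      exact le_trans hx (monotone_cdf _ hxv.le)
    have hrc : Filter.Tendsto (cdf (P.map Z)) (𝓝[>] u) (𝓝 (cdf (P.map Z) u)) :=
      ((cdf (P.map Z)).right_continuous u).tendsto.mono_left
        (nhdsWithin_mono u Set.Ioi_subset_Ici_self)
    exact ge_of_tendsto hrc hv
  · intro h
    exact csInf_le (var_set_bddBelow hZ ht.1) h

private lemma VaR_monotoneOn (hZ : AEMeasurable Z P) :
    MonotoneOn (fun t => VaR P t Z) (Set.Ioo (0:ℝ) 1) := by
  intro s hs t ht hst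
  have h1 : VaR P t Z ≤ VaR P t Z := le_refl _
  have h2 : t ≤ cdf (P.map Z) (VaR P t Z) := (VaR_le_iff hZ ht _).mp h1
  exact (VaR_le_iff hZ hs _).mpr (le_trans hst h2)

private lemma ofReal_max_zero (a : ℝ) : ENNReal.ofReal (max a 0) = ENNReal.ofReal a := by
  rcases le_total a 0 with h | h
  · simp [max_eq_right h, ENNReal.ofReal_eq_zero.2 h]
  · simp [max_eq_left h]

variable {α : ℝ}

private lemma VaR_superlevel (hZ : AEMeasurable Z P) (hα : α ∈ Set.Ioo (0:ℝ) 1) (u : ℝ) :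
    {t | u < VaR P t Z} ∩ Set.Ioo α 1 = Set.Ioo (max α (cdf (P.map Z) u)) 1 := by
  ext t
  simp only [Set.mem_inter_iff, Set.mem_setOf_eq, Set.mem_Ioo, max_lt_iff]
  constructor
  · rintro ⟨hu, hαt, ht1⟩
    refine ⟨⟨hαt, ?_⟩, ht1⟩
    by_contra h
    push_neg at h
    exact absurd ((VaR_le_iff hZ ⟨hα.1.trans hαt, ht1⟩ u).mpr h) (not_le.2 hu)
  · rintro ⟨⟨hαt, hFt⟩, ht1⟩
    refine ⟨?_, hαt, ht1⟩
    by_contra h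
    push_neg at h
    exact absurd ((VaR_le_iff hZ ⟨hα.1.trans hαt, ht1⟩ u).mp h) (not_le.2 hFt)

/-- Layer-cake identity on the Lebesgue side. -/
private lemma leb_layer (hZ : AEMeasurable Z P) (hα : α ∈ Set.Ioo (0:ℝ) 1) (z : ℝ) :
    ∫⁻ t in Set.Ioo α 1, ENNReal.ofReal (VaR P t Z - z)
      = ∫⁻ u in Set.Ioi (0:ℝ), ENNReal.ofReal (1 - max α (cdf (P.map Z) (z + u))) := by
  have hmono : MonotoneOn (fun t => max (VaR P t Z - z) 0) (Set.Ioo α 1) := by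
    intro s hs t ht hst
    have := VaR_monotoneOn hZ (Set.Ioo_subset_Ioo hα.1.le le_rfl hs)
      (Set.Ioo_subset_Ioo hα.1.le le_rfl ht) hst
    exact max_le_max (by linarith) le_rfl
  have hmeas : AEMeasurable (fun t => max (VaR P t Z - z) 0)
      (volume.restrict (Set.Ioo α 1)) :=
    aemeasurable_restrict_of_monotoneOn measurableSet_Ioo hmono
  have h1 : ∀ t : ℝ, ENNReal.ofReal (VaR P t Z - z)
      = ENNReal.ofReal (max (VaR P t Z - z) 0) := fun t => (ofReal_max_zero _).symm
  simp_rw [h1]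
  rw [lintegral_eq_lintegral_meas_lt (f := fun t => max (VaR P t Z - z) 0) _
    (Filter.Eventually.of_forall fun t => le_max_right _ _) hmeas]
  refine setLIntegral_congr_fun measurableSet_Ioi
    (fun u hu => ?_)
  have hset : {t | u < max (VaR P t Z - z) 0} ∩ Set.Ioo α 1
      = Set.Ioo (max α (cdf (P.map Z) (z + u))) 1 := by
    rw [← VaR_superlevel hZ hα (z + u)]
    ext t
    simp only [Set.mem_inter_iff, Set.mem_setOf_eq, and_congr_left_iff]
    intro _
    constructor
    · intro h
      rcases max_cases (VaR P t Z - z) 0 with ⟨he, _⟩ | ⟨he, _⟩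
      · rw [he] at h; linarith
      · rw [he] at h; exact absurd hu (not_lt.2 h.le)
    · intro h
      calc u < VaR P t Z - z := by linarith
        _ ≤ max (VaR P t Z - z) 0 := le_max_left _ _
  rw [Measure.restrict_apply' measurableSet_Ioo, hset, Real.volume_Ioo]

private lemma meas_gt_eq (hZ : AEMeasurable Z P) (v : ℝ) :
    P {ω | v < Z ω} = ENNReal.ofReal (1 - cdf (P.map Z) v) := by
  have : IsProbabilityMeasure (P.map Z) := Measure.isProbabilityMeasure_map hZ
  have hns : NullMeasurableSet {ω | Z ω ≤ v} P := hZ.nullMeasurable measurableSet_Iic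
  have hc : {ω | v < Z ω} = {ω | Z ω ≤ v}ᶜ := by ext ω; simp [not_le]
  rw [hc, measure_compl₀ hns (measure_ne_top _ _), meas_le_eq hZ,
    ENNReal.ofReal_sub _ (cdf_nonneg _ _), measure_univ, ENNReal.ofReal_one]

/-- Layer-cake identity on the probability side. -/
private lemma prob_layer (hZ : Integrable Z P) (z : ℝ) :
    ENNReal.ofReal (∫ ω, max (Z ω - z) 0 ∂P)
      = ∫⁻ u in Set.Ioi (0:ℝ), ENNReal.ofReal (1 - cdf (P.map Z) (z + u)) := by
  have hint : Integrable (fun ω => max (Z ω - z) 0) P :=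
    (hZ.sub (integrable_const z)).pos_part
  rw [ofReal_integral_eq_lintegral_ofReal (f := fun ω => max (Z ω - z) 0) hint
    (Filter.Eventually.of_forall fun ω => le_max_right _ _),
    lintegral_eq_lintegral_meas_lt (f := fun ω => max (Z ω - z) 0) P
      (Filter.Eventually.of_forall fun ω => le_max_right _ _) hint.aemeasurable]
  refine setLIntegral_congr_fun measurableSet_Ioi
    (fun u hu => ?_)
  have hset : {ω | u < max (Z ω - z) 0} = {ω | z + u < Z ω} := by
    ext ω
    simp only [Set.mem_setOf_eq]
    constructor
    · intro h
      rcases max_cases (Z ω - z) 0 with ⟨he, _⟩ | ⟨he, _⟩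
      · rw [he] at h; linarith
      · rw [he] at h; exact absurd hu (not_lt.2 h.le)
    · intro h
      calc u < Z ω - z := by linarith
        _ ≤ max (Z ω - z) 0 := le_max_left _ _
  rw [hset, meas_gt_eq hZ.aemeasurable]

private lemma leb_le_prob (hZ : Integrable Z P) (hα : α ∈ Set.Ioo (0:ℝ) 1) (z : ℝ) :
    ∫⁻ t in Set.Ioo α 1, ENNReal.ofReal (VaR P t Z - z)
      ≤ ENNReal.ofReal (∫ ω, max (Z ω - z) 0 ∂P) := by
  rw [leb_layer hZ.aemeasurable hα z, prob_layer hZ z]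
  refine lintegral_mono fun u => ENNReal.ofReal_le_ofReal ?_
  have : cdf (P.map Z) (z + u) ≤ max α (cdf (P.map Z) (z + u)) := le_max_right _ _
  linarith

private lemma lint_lt_top (hZ : Integrable Z P) (hα : α ∈ Set.Ioo (0:ℝ) 1) (z : ℝ) :
    ∫⁻ t in Set.Ioo α 1, ENNReal.ofReal (VaR P t Z - z) < ⊤ :=
  lt_of_le_of_lt (leb_le_prob hZ hα z) ENNReal.ofReal_lt_top

private lemma integrableOn_VaR (hZ : Integrable Z P) (hα : α ∈ Set.Ioo (0:ℝ) 1) :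
    IntegrableOn (fun t => VaR P t Z) (Set.Ioo α 1) := by
  have hmono : MonotoneOn (fun t => VaR P t Z) (Set.Ioo α 1) := fun s hs t ht hst =>
    VaR_monotoneOn hZ.aemeasurable (Set.Ioo_subset_Ioo hα.1.le le_rfl hs)
      (Set.Ioo_subset_Ioo hα.1.le le_rfl ht) hst
  refine ⟨(aemeasurable_restrict_of_monotoneOn measurableSet_Ioo hmono).aestronglyMeasurable, ?_⟩
  rw [hasFiniteIntegral_iff_norm]
  set c := |VaR P α Z| with hc
  have hbound : ∀ t ∈ Set.Ioo α 1, ENNReal.ofReal ‖VaR P t Z‖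
      ≤ ENNReal.ofReal (VaR P t Z - 0) + ENNReal.ofReal c := by
    intro t ht
    have hmt : VaR P α Z ≤ VaR P t Z :=
      VaR_monotoneOn hZ.aemeasurable hα ⟨hα.1.trans ht.1, ht.2⟩ ht.1.le
    rw [Real.norm_eq_abs, sub_zero]
    rcases le_total (VaR P t Z) 0 with h | h
    · rw [abs_of_nonpos h]
      refine le_trans (ENNReal.ofReal_le_ofReal ?_) (le_add_self)
      rw [hc, abs_of_nonpos (hmt.trans h)]
      linarith
    · rw [abs_of_nonneg h]
      exact le_add_right le_rfl
  calc ∫⁻ t in Set.Ioo α 1, ENNReal.ofReal ‖VaR P t Z‖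
      ≤ ∫⁻ t in Set.Ioo α 1, (ENNReal.ofReal (VaR P t Z - 0) + ENNReal.ofReal c) := by
        have hqm : AEMeasurable (fun t => VaR P t Z) (volume.restrict (Set.Ioo α 1)) :=
          aemeasurable_restrict_of_monotoneOn measurableSet_Ioo hmono
        have hgm : AEMeasurable (fun t => ENNReal.ofReal (VaR P t Z - 0) + ENNReal.ofReal c)
            (volume.restrict (Set.Ioo α 1)) :=
          (ENNReal.measurable_ofReal.comp_aemeasurable
            (hqm.sub aemeasurable_const)).add aemeasurable_const
        exact setLIntegral_mono_ae hgm (Filter.Eventually.of_forall hbound)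
    _ = (∫⁻ t in Set.Ioo α 1, ENNReal.ofReal (VaR P t Z - 0))
        + ENNReal.ofReal c * volume (Set.Ioo α 1) := by
        rw [lintegral_add_right' _ aemeasurable_const, lintegral_const,
          Measure.restrict_apply MeasurableSet.univ, Set.univ_inter]
    _ < ⊤ := by
        refine ENNReal.add_lt_top.2 ⟨lint_lt_top hZ hα 0, ?_⟩
        exact ENNReal.mul_lt_top ENNReal.ofReal_lt_top (by simp [Real.volume_Ioo])

private lemma setIntegral_VaR_sub (hZ : Integrable Z P) (hα : α ∈ Set.Ioo (0:ℝ) 1) (z : ℝ) :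
    ∫ t in Set.Ioo α 1, max (VaR P t Z - z) 0
      = (∫⁻ t in Set.Ioo α 1, ENNReal.ofReal (VaR P t Z - z)).toReal := by
  have hint : IntegrableOn (fun t => max (VaR P t Z - z) 0) (Set.Ioo α 1) :=
    ((integrableOn_VaR hZ hα).sub (integrableOn_const (by simp [Real.volume_Ioo]))).pos_part
  rw [← ENNReal.toReal_ofReal
      (integral_nonneg (f := fun t => max (VaR P t Z - z) 0)
        (μ := volume.restrict (Set.Ioo α 1)) fun t => le_max_right _ _),
    ofReal_integral_eq_lintegral_ofReal (f := fun t => max (VaR P t Z - z) 0) hint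
      (Filter.Eventually.of_forall fun t => le_max_right _ _)]
  congr 1
  exact lintegral_congr fun t => ofReal_max_zero _

/-- Key upper bound: `∫_{(α,1)} VaR_t(Z) dt ≤ (1-α) z + E[(Z-z)⁺]` for every `z`. -/
private lemma key_le (hZ : Integrable Z P) (hα : α ∈ Set.Ioo (0:ℝ) 1) (z : ℝ) :
    ∫ t in Set.Ioo α 1, VaR P t Z ≤ (1 - α) * z + ∫ ω, max (Z ω - z) 0 ∂P := by
  have hIv := integrableOn_VaR hZ hα
  have hIc : IntegrableOn (fun _ : ℝ => z) (Set.Ioo α 1) :=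
    integrableOn_const (by simp [Real.volume_Ioo])
  have h1 : ∫ t in Set.Ioo α 1, VaR P t Z
      = (∫ t in Set.Ioo α 1, (VaR P t Z - z)) + (1 - α) * z := by
    rw [integral_sub hIv hIc, setIntegral_const, measureReal_def, Real.volume_Ioo,
      ENNReal.toReal_ofReal (by linarith [hα.2] : (0:ℝ) ≤ 1 - α), smul_eq_mul]
    ring
  have h2 : ∫ t in Set.Ioo α 1, (VaR P t Z - z)
      ≤ ∫ t in Set.Ioo α 1, max (VaR P t Z - z) 0 :=
    integral_mono (hIv.sub hIc) ((hIv.sub hIc).pos_part) fun t => le_max_left _ _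
  have h3 : ∫ t in Set.Ioo α 1, max (VaR P t Z - z) 0 ≤ ∫ ω, max (Z ω - z) 0 ∂P := by
    rw [setIntegral_VaR_sub hZ hα z]
    refine ENNReal.toReal_le_of_le_ofReal
      (integral_nonneg (f := fun ω => max (Z ω - z) 0) (μ := P) fun ω => le_max_right _ _) ?_
    exact leb_le_prob hZ hα z
  linarith

/-- Key lower bound: `(1-α) VaR_α(Z) + E[(Z - VaR_α(Z))⁺] ≤ ∫_{(α,1)} VaR_t(Z) dt`. -/
private lemma key_ge (hZ : Integrable Z P) (hα : α ∈ Set.Ioo (0:ℝ) 1) :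
    (1 - α) * VaR P α Z + ∫ ω, max (Z ω - VaR P α Z) 0 ∂P
      ≤ ∫ t in Set.Ioo α 1, VaR P t Z := by
  set z := VaR P α Z with hz
  have hIv := integrableOn_VaR hZ hα
  have hIc : IntegrableOn (fun _ : ℝ => z) (Set.Ioo α 1) :=
    integrableOn_const (by simp [Real.volume_Ioo])
  have hFz : α ≤ cdf (P.map Z) z := (VaR_le_iff hZ.aemeasurable hα z).mp le_rfl
  have h1 : ∫ t in Set.Ioo α 1, VaR P t Z
      = (∫ t in Set.Ioo α 1, (VaR P t Z - z)) + (1 - α) * z := by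
    rw [integral_sub hIv hIc, setIntegral_const, measureReal_def, Real.volume_Ioo,
      ENNReal.toReal_ofReal (by linarith [hα.2] : (0:ℝ) ≤ 1 - α), smul_eq_mul]
    ring
  have h2 : ∫ t in Set.Ioo α 1, (VaR P t Z - z)
      = ∫ t in Set.Ioo α 1, max (VaR P t Z - z) 0 := by
    refine setIntegral_congr_fun measurableSet_Ioo fun t ht => ?_
    have hmt : z ≤ VaR P t Z :=
      VaR_monotoneOn hZ.aemeasurable hα ⟨hα.1.trans ht.1, ht.2⟩ ht.1.le
    rw [max_eq_left (by linarith)]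
  have h3 : ∫ t in Set.Ioo α 1, max (VaR P t Z - z) 0 = ∫ ω, max (Z ω - z) 0 ∂P := by
    rw [setIntegral_VaR_sub hZ hα z, leb_layer hZ.aemeasurable hα z]
    have hmax : ∀ u ∈ Set.Ioi (0:ℝ),
        ENNReal.ofReal (1 - max α (cdf (P.map Z) (z + u)))
          = ENNReal.ofReal (1 - cdf (P.map Z) (z + u)) := by
      intro u hu
      have : α ≤ cdf (P.map Z) (z + u) :=
        hFz.trans (monotone_cdf _ (by linarith [Set.mem_Ioi.mp hu]))
      rw [max_eq_right this]
    rw [setLIntegral_congr_fun measurableSet_Ioi hmax,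
      ← prob_layer hZ z,
      ENNReal.toReal_ofReal
        (integral_nonneg (f := fun ω => max (Z ω - z) 0) (μ := P) fun ω => le_max_right _ _)]
  linarith

end AVaRHelpers

/-- Convexity of the Average-Value-at-Risk: for `λ ∈ (0,1)`,
`AVaR_α(λX + (1-λ)Y) ≤ λ AVaR_α(X) + (1-λ) AVaR_α(Y)`. -/
theorem avar_convex
    {Ω : Type*} [MeasurableSpace Ω] (P : Measure Ω) [IsProbabilityMeasure P]
    (X Y : Ω → ℝ) (hX : Integrable X P) (hY : Integrable Y P)
    (α : ℝ) (hα : α ∈ Set.Ioo (0 : ℝ) 1)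
    (l : ℝ) (hl : l ∈ Set.Ioo (0 : ℝ) 1) :
    AVaR P α (fun ω => l * X ω + (1 - l) * Y ω) ≤
      l * AVaR P α X + (1 - l) * AVaR P α Y := by
  obtain ⟨hl0, hl1⟩ := hl
  obtain ⟨hα0, hα1⟩ := hα
  set Zm : Ω → ℝ := fun ω => l * X ω + (1 - l) * Y ω with hZm
  have hZmI : Integrable Zm P := (hX.const_mul l).add (hY.const_mul (1 - l))
  set zX := VaR P α X with hzX
  set zY := VaR P α Y with hzY
  set z := l * zX + (1 - l) * zY with hz
  -- pointwise convexity of the positive part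
  have hptwise : ∀ ω, max (Zm ω - z) 0
      ≤ l * max (X ω - zX) 0 + (1 - l) * max (Y ω - zY) 0 := by
    intro ω
    have h1 : Zm ω - z = l * (X ω - zX) + (1 - l) * (Y ω - zY) := by
      simp only [hZm, hz]; ring
    have h2 : l * (X ω - zX) ≤ l * max (X ω - zX) 0 :=
      mul_le_mul_of_nonneg_left (le_max_left _ _) hl0.le
    have h3 : (1 - l) * (Y ω - zY) ≤ (1 - l) * max (Y ω - zY) 0 :=
      mul_le_mul_of_nonneg_left (le_max_left _ _) (by linarith)
    have h4 : 0 ≤ l * max (X ω - zX) 0 + (1 - l) * max (Y ω - zY) 0 := by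
      have := le_max_right (X ω - zX) 0
      have := le_max_right (Y ω - zY) 0
      nlinarith
    rw [max_le_iff]
    constructor
    · rw [h1]; linarith
    · exact h4
  have hIX : Integrable (fun ω => max (X ω - zX) 0) P := (hX.sub (integrable_const _)).pos_part
  have hIY : Integrable (fun ω => max (Y ω - zY) 0) P := (hY.sub (integrable_const _)).pos_part
  have hIZm : Integrable (fun ω => max (Zm ω - z) 0) P := (hZmI.sub (integrable_const _)).pos_part
  have hmix : ∫ ω, max (Zm ω - z) 0 ∂P
      ≤ l * ∫ ω, max (X ω - zX) 0 ∂P + (1 - l) * ∫ ω, max (Y ω - zY) 0 ∂P := by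
    calc ∫ ω, max (Zm ω - z) 0 ∂P
        ≤ ∫ ω, (l * max (X ω - zX) 0 + (1 - l) * max (Y ω - zY) 0) ∂P :=
          integral_mono hIZm ((hIX.const_mul l).add (hIY.const_mul (1 - l))) hptwise
      _ = l * ∫ ω, max (X ω - zX) 0 ∂P + (1 - l) * ∫ ω, max (Y ω - zY) 0 ∂P := by
          rw [integral_add (hIX.const_mul l) (hIY.const_mul (1 - l)),
            integral_const_mul, integral_const_mul]
  have hkey : ∫ t in Set.Ioo α 1, VaR P t Zm
      ≤ l * (∫ t in Set.Ioo α 1, VaR P t X) + (1 - l) * (∫ t in Set.Ioo α 1, VaR P t Y) := by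
    have h1 := key_le hZmI ⟨hα0, hα1⟩ z
    have h2 := key_ge hX ⟨hα0, hα1⟩
    have h3 := key_ge hY ⟨hα0, hα1⟩
    rw [← hzX] at h2
    rw [← hzY] at h3
    rw [hz] at h1 hmix
    have h2' := mul_le_mul_of_nonneg_left h2 hl0.le
    have h3' := mul_le_mul_of_nonneg_left h3 (by linarith : (0:ℝ) ≤ 1 - l)
    linarith
  -- rewrite the AVaR's as integrals over `Ioo α 1`
  have hrw : ∀ W : Ω → ℝ, AVaR P α W = (1 - α)⁻¹ * ∫ t in Set.Ioo α 1, VaR P t W := by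
    intro W
    rw [AVaR, intervalIntegral.integral_of_le hα1.le, integral_Ioc_eq_integral_Ioo]
  rw [hrw, hrw, hrw]
  have hinv : (0:ℝ) < (1 - α)⁻¹ := inv_pos.2 (by linarith)
  set A := ∫ t in Set.Ioo α 1, VaR P t Zm with hA
  set B := ∫ t in Set.Ioo α 1, VaR P t X with hB
  set C := ∫ t in Set.Ioo α 1, VaR P t Y with hC
  have h := mul_le_mul_of_nonneg_left hkey hinv.le
  nlinarith [h]
end

section
/- Let A be a topological space, K ⊆ A a nonempty subset, and for each N ∈ ℕ let w_N : A → ℝ be a nonnegative lower semicontinuous function that is inf-compact on K (i.e. for every r ∈ ℝ the set { a ∈ K : w_N(a) ≤ r } is compact). Suppose w_N increases pointwise to a function w as N → ∞, where w is also nonnegative, lower semicontinuous, and inf-compact on K. Then lim_{N → ∞} inf_{a ∈ K} w_N(a) = inf_{a ∈ K} w(a), and all these infima are attained whenever they are finite. -/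
open Filter

/-- A nonnegative function with closed sublevel sets that is inf-compact on a
nonempty set `K` attains its infimum on `K`. -/
lemma exists_min_of_lsc_infCompact {A : Type*} [TopologicalSpace A]
    (K : Set A) (hK : K.Nonempty) (u : A → ℝ) (hnn : ∀ a, 0 ≤ u a)
    (hcl : ∀ r : ℝ, IsClosed {a : A | u a ≤ r})
    (hcpt : ∀ r : ℝ, IsCompact {a ∈ K | u a ≤ r}) :
    ∃ a ∈ K, u a = ⨅ b : K, u b := by
  haveI : Nonempty K := hK.to_subtype
  have bdd : BddBelow (Set.range fun b : K => u b) :=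
    ⟨0, by rintro x ⟨b, rfl⟩; exact hnn b⟩
  set m : ℝ := ⨅ b : K, u b with hm
  have hex : ∀ ε : ℝ, 0 < ε → ∃ a ∈ K, u a < m + ε := by
    intro ε hε
    have : m < m + ε := by linarith
    obtain ⟨⟨b, hb⟩, hb'⟩ := exists_lt_of_ciInf_lt (show (⨅ b : K, u b) < m + ε from this)
    exact ⟨b, hb, hb'⟩
  -- intersect the compact set `{a ∈ K | u a ≤ m + 1}` with closed sublevel sets
  have key : ({a ∈ K | u a ≤ m + 1} ∩ ⋂ n : ℕ, {a : A | u a ≤ m + 1 / (n + 1)}).Nonempty := by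
    refine (hcpt (m + 1)).inter_iInter_nonempty _ (fun n => hcl _) ?_
    intro s
    set N : ℕ := s.sup id with hN
    obtain ⟨a, haK, ha⟩ := hex (1 / (N + 1)) (by positivity)
    refine ⟨a, ⟨haK, ?_⟩, ?_⟩
    · have h1 : (1 : ℝ) / (N + 1) ≤ 1 := by
        rw [div_le_one (by positivity)]; linarith [Nat.cast_nonneg (α := ℝ) N]
      linarith
    · simp only [Set.mem_iInter, Set.mem_setOf_eq, Finset.mem_coe]
      intro i hi
      have hiN : (i : ℝ) ≤ N := by exact_mod_cast Finset.le_sup (f := id) hi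
      have : (1 : ℝ) / (N + 1) ≤ 1 / (i + 1) := by
        apply one_div_le_one_div_of_le <;> linarith [Nat.cast_nonneg (α := ℝ) i]
      linarith
  obtain ⟨a, ⟨haK, -⟩, ha⟩ := key
  simp only [Set.mem_iInter, Set.mem_setOf_eq] at ha
  refine ⟨a, haK, le_antisymm ?_ (ciInf_le bdd ⟨a, haK⟩)⟩
  -- `u a ≤ m + 1/(n+1)` for all `n`, hence `u a ≤ m`
  have : Filter.Tendsto (fun n : ℕ => m + 1 / ((n : ℝ) + 1)) atTop (nhds m) := by
    have : Tendsto (fun n : ℕ => 1 / ((n : ℝ) + 1)) atTop (nhds 0) :=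
      tendsto_one_div_add_atTop_nhds_zero_nat
    simpa using tendsto_const_nhds.add this
  exact ge_of_tendsto this (Filter.Eventually.of_forall ha)

/-- Let `K ⊆ A` be nonempty and let `w_N : A → ℝ` be nonnegative, lower
semicontinuous and inf-compact on `K` functions increasing pointwise to a
function `w` that is also nonnegative, lower semicontinuous and inf-compact
on `K`. Then `inf_{a ∈ K} w_N(a) → inf_{a ∈ K} w(a)` as `N → ∞`, and all
these infima are attained. -/
theorem tendsto_inf_of_monotone_lsc_infCompact
    {A : Type*} [TopologicalSpace A] (K : Set A) (hK : K.Nonempty)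
    (w : ℕ → A → ℝ) (wlim : A → ℝ)
    (hw_nonneg : ∀ N a, 0 ≤ w N a)
    (hw_lsc : ∀ N (r : ℝ), IsClosed {a : A | w N a ≤ r})
    (hw_infcompact : ∀ N (r : ℝ), IsCompact {a ∈ K | w N a ≤ r})
    (hw_mono : ∀ a, Monotone fun N => w N a)
    (hw_tendsto : ∀ a, Tendsto (fun N => w N a) atTop (nhds (wlim a)))
    (hwlim_nonneg : ∀ a, 0 ≤ wlim a)
    (hwlim_lsc : ∀ r : ℝ, IsClosed {a : A | wlim a ≤ r})
    (hwlim_infcompact : ∀ r : ℝ, IsCompact {a ∈ K | wlim a ≤ r}) :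
    Tendsto (fun N => ⨅ a : K, w N a) atTop (nhds (⨅ a : K, wlim a)) ∧
    (∀ N, ∃ a ∈ K, w N a = ⨅ b : K, w N b) ∧
    (∃ a ∈ K, wlim a = ⨅ b : K, wlim b) := by
  haveI : Nonempty K := hK.to_subtype
  have att : ∀ N, ∃ a ∈ K, w N a = ⨅ b : K, w N b := fun N =>
    exists_min_of_lsc_infCompact K hK (w N) (hw_nonneg N) (hw_lsc N) (hw_infcompact N)
  have attlim : ∃ a ∈ K, wlim a = ⨅ b : K, wlim b :=
    exists_min_of_lsc_infCompact K hK wlim hwlim_nonneg hwlim_lsc hwlim_infcompact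
  refine ⟨?_, att, attlim⟩
  set m : ℕ → ℝ := fun N => ⨅ a : K, w N a with hm
  set mlim : ℝ := ⨅ a : K, wlim a with hmlim
  have bdd : ∀ N, BddBelow (Set.range fun b : K => w N b) := fun N =>
    ⟨0, by rintro x ⟨b, rfl⟩; exact hw_nonneg N b⟩
  have bddlim : BddBelow (Set.range fun b : K => wlim b) :=
    ⟨0, by rintro x ⟨b, rfl⟩; exact hwlim_nonneg b⟩
  have hle : ∀ N a, w N a ≤ wlim a := fun N a =>
    (hw_mono a).ge_of_tendsto (hw_tendsto a) N
  have hmono : Monotone m := by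
    intro M N hMN
    exact le_ciInf fun b => (ciInf_le (bdd M) b).trans (hw_mono b hMN)
  have hmle : ∀ N, m N ≤ mlim :=
    fun N => le_ciInf fun b => (ciInf_le (bdd N) b).trans (hle N b)
  have hbddA : BddAbove (Set.range m) := ⟨mlim, by rintro x ⟨N, rfl⟩; exact hmle N⟩
  set L : ℝ := ⨆ N, m N with hL
  have htend : Tendsto m atTop (nhds L) := tendsto_atTop_ciSup hmono hbddA
  have hmL : ∀ N, m N ≤ L := fun N => le_ciSup hbddA N
  have hLlim : L ≤ mlim := ciSup_le hmle
  -- choose minimizers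
  choose a haK hamin using att
  have haC : ∀ N, a N ∈ {x ∈ K | w 0 x ≤ L} := by
    intro N
    refine ⟨haK N, ?_⟩
    calc w 0 (a N) ≤ w N (a N) := hw_mono (a N) (Nat.zero_le N)
      _ = m N := hamin N
      _ ≤ L := hmL N
  obtain ⟨x, hxC, hx⟩ := (hw_infcompact 0 L).exists_clusterPt
    (f := Filter.map a atTop)
    (le_principal_iff.2 (Filter.mem_map.2 (Filter.Eventually.of_forall haC)))
  have hwx : ∀ M, w M x ≤ L := by
    intro M
    have hmem : {y : A | w M y ≤ L} ∈ Filter.map a atTop := by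
      rw [Filter.mem_map]
      filter_upwards [Filter.eventually_ge_atTop M] with N hN
      calc w M (a N) ≤ w N (a N) := hw_mono (a N) hN
        _ = m N := hamin N
        _ ≤ L := hmL N
    have : ClusterPt x (Filter.principal {y : A | w M y ≤ L}) :=
      hx.mono (le_principal_iff.2 hmem)
    have hclos : x ∈ closure {y : A | w M y ≤ L} := mem_closure_iff_clusterPt.2 this
    rwa [(hw_lsc M L).closure_eq] at hclos
  have hwlimx : wlim x ≤ L := le_of_tendsto (hw_tendsto x) (Filter.Eventually.of_forall hwx)
  have hlimL : mlim ≤ L := (ciInf_le bddlim ⟨x, hxC.1⟩).trans hwlimx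
  have : L = mlim := le_antisymm hLlim hlimL
  rw [← this]
  exact htend
end

section
/- Let X and A be Polish spaces, let K be a Borel subset of X × A such that for every x ∈ X the section A(x) := { a ∈ A : (x,a) ∈ K } is nonempty, and let u : K → ℝ be a nonnegative lower semicontinuous function that is inf-compact on K, i.e. for every x ∈ X and every r ∈ ℝ the set { a ∈ A(x) : u(x,a) ≤ r } is compact. Then there exists a Borel measurable function f : X → A with f(x) ∈ A(x) for all x ∈ X such that u(x, f(x)) = inf_{a ∈ A(x)} u(x,a) for all x ∈ X, and the function u*(x) := inf_{a ∈ A(x)} u(x,a) is Borel measurable. -/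
open Filter Topology

open Set Function MeasureTheory PiNat

section SepR

variable {X Y : Type*} [MeasurableSpace X] [MeasurableSpace Y]

/-- Rectangle-respecting multiple Borel separation predicate. -/
def SepR (B : Set (X × Y)) (A : ℕ → Set X) (F : ℕ → Set Y) : Prop :=
  ∃ (D : Set (X × Y)) (S : ℕ → Set X), MeasurableSet D ∧ (∀ n, MeasurableSet (S n)) ∧
    B ⊆ D ∧ (∀ n, A n ⊆ S n) ∧ ∀ p ∈ D, ∃ n, p.1 ∉ S n ∧ p.2 ∉ F n

lemma SepR.mono {B B' : Set (X × Y)} {A A' : ℕ → Set X} {F : ℕ → Set Y}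
    (h : SepR B A F) (hB : B' ⊆ B) (hA : ∀ n, A' n ⊆ A n) : SepR B' A' F := by
  obtain ⟨D, S, hD, hS, hBD, hAS, hw⟩ := h
  exact ⟨D, S, hD, hS, hB.trans hBD, fun n => (hA n).trans (hAS n), hw⟩

lemma sepR_decompB {B : Set (X × Y)} {Bs : ℕ → Set (X × Y)} {A : ℕ → Set X} {F : ℕ → Set Y}
    (hcov : B ⊆ ⋃ m, Bs m) (h : ∀ m, SepR (Bs m) A F) : SepR B A F := by
  choose D S hD hS hBD hAS hw using h
  refine ⟨⋃ m, D m, fun n => ⋂ m, S m n, MeasurableSet.iUnion hD,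
    fun n => MeasurableSet.iInter fun m => hS m n,
    hcov.trans (iUnion_mono hBD), fun n => subset_iInter fun m => hAS m n, ?_⟩
  rintro p hp
  obtain ⟨m, hm⟩ := mem_iUnion.1 hp
  obtain ⟨n, h1, h2⟩ := hw m p hm
  exact ⟨n, fun hmem => h1 (mem_iInter.1 hmem m), h2⟩

lemma sepR_decompA {B : Set (X × Y)} {A : ℕ → Set X} {F : ℕ → Set Y} (j : ℕ)
    {Q : ℕ → Set X} (hcov : A j ⊆ ⋃ m, Q m)
    (h : ∀ m, SepR B (Function.update A j (Q m)) F) : SepR B A F := by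
  classical
  choose D S hD hS hBD hAS hw using h
  refine ⟨⋂ m, D m, Function.update (fun n => ⋂ m, S m n) j (⋃ m, S m j),
    MeasurableSet.iInter hD, ?_, subset_iInter hBD, ?_, ?_⟩
  · intro n
    by_cases hn : n = j
    · subst hn
      rw [Function.update_self]
      exact MeasurableSet.iUnion fun m => hS m n
    · rw [Function.update_of_ne hn]
      exact MeasurableSet.iInter fun m => hS m n
  · intro n
    by_cases hn : n = j
    · subst hn
      rw [Function.update_self]
      intro x hx
      obtain ⟨m, hm⟩ := mem_iUnion.1 (hcov hx)
      refine mem_iUnion.2 ⟨m, hAS m n ?_⟩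
      rw [Function.update_self]
      exact hm
    · rw [Function.update_of_ne hn]
      refine subset_iInter fun m => ?_
      have := hAS m n
      rwa [Function.update_of_ne hn] at this
  · intro p hp
    by_cases hc : ∃ m n, n ≠ j ∧ p.1 ∉ S m n ∧ p.2 ∉ F n
    · obtain ⟨m, n, hnj, h1, h2⟩ := hc
      refine ⟨n, ?_, h2⟩
      rw [Function.update_of_ne hnj]
      exact fun hmem => h1 (mem_iInter.1 hmem m)
    · push_neg at hc
      have key : ∀ m, p.1 ∉ S m j ∧ p.2 ∉ F j := by
        intro m
        obtain ⟨n, h1, h2⟩ := hw m p (mem_iInter.1 hp m)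
        by_cases hnj : n = j
        · exact hnj ▸ ⟨h1, h2⟩
        · exact absurd h2 (not_not.2 (hc m n hnj h1))
      refine ⟨j, ?_, (key 0).2⟩
      rw [Function.update_self]
      exact fun hmem => (key (mem_iUnion.1 hmem).choose).1 (mem_iUnion.1 hmem).choose_spec

lemma sepR_iterA {B : Set (X × Y)} {F : ℕ → Set Y} :
    ∀ (J : ℕ) (A : ℕ → Set X) (Q : ℕ → ℕ → Set X), (∀ i, A i ⊆ ⋃ m, Q i m) →
      (∀ m : ℕ → ℕ, SepR B (fun i => if i ≤ J then Q i (m i) else A i) F) → SepR B A F := by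
  classical
  intro J
  induction J with
  | zero =>
    intro A Q hcov h
    refine sepR_decompA 0 (hcov 0) (fun m0 => ?_)
    have : Function.update A 0 (Q 0 m0) = fun i => if i ≤ 0 then Q i ((fun _ => m0) i) else A i := by
      funext i
      cases i with
      | zero => simp
      | succ k => simp [Function.update_of_ne (Nat.succ_ne_zero k)]
    rw [this]; exact h _
  | succ J IH =>
    intro A Q hcov h
    refine sepR_decompA (J + 1) (hcov (J + 1)) (fun m' => ?_)
    refine IH (Function.update A (J + 1) (Q (J + 1) m')) Q ?_ ?_
    · intro i
      by_cases hi : i = J + 1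
      · subst hi; simp only [Function.update_self]; exact subset_iUnion _ m'
      · rw [Function.update_of_ne hi]; exact hcov i
    · intro m
      have : (fun i => if i ≤ J then Q i (m i) else Function.update A (J + 1) (Q (J + 1) m') i)
          = fun i => if i ≤ J + 1 then Q i (Function.update m (J + 1) m' i) else A i := by
        funext i
        rcases lt_trichotomy i (J + 1) with hi | hi | hi
        · rw [if_pos (Nat.lt_succ_iff.1 hi), if_pos hi.le,
            Function.update_of_ne hi.ne]
        · subst hi
          rw [if_neg (by omega), if_pos le_rfl, Function.update_self, Function.update_self]
        · rw [if_neg (by omega), if_neg (by omega), Function.update_of_ne (by omega)]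
      rw [this]; exact h _

end SepR

section Core

variable {X Y : Type*} [TopologicalSpace X] [TopologicalSpace Y] [T2Space X]
  [MeasurableSpace X] [OpensMeasurableSpace X] [MeasurableSpace Y] [OpensMeasurableSpace Y]

theorem sepR_core (φ : (ℕ → ℕ) → X × Y) (hφ : Continuous φ)
    (g : ℕ → (ℕ → ℕ) → X) (hg : ∀ n, Continuous (g n)) (F : ℕ → Set Y)
    (hF : ∀ n, IsClosed (F n))
    (H : ∀ p ∈ range φ, ∃ n, p.1 ∉ range (g n) ∧ p.2 ∉ F n) :
    SepR (range φ) (fun n => range (g n)) F := by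
  classical
  by_contra hsep
  have I : ∀ (k : ℕ) (bB : ℕ → ℕ) (b : ℕ → ℕ → ℕ),
      ¬ SepR (φ '' cylinder bB k) (fun i => g i '' cylinder (b i) (k - i)) F →
      ∃ (bB' : ℕ → ℕ) (b' : ℕ → ℕ → ℕ), bB' ∈ cylinder bB k ∧
        (∀ i, b' i ∈ cylinder (b i) (k - i)) ∧
        ¬ SepR (φ '' cylinder bB' (k+1)) (fun i => g i '' cylinder (b' i) (k+1-i)) F := by
    intro k bB b
    contrapose!
    intro hstep
    refine sepR_decompB (Bs := fun mB => φ '' cylinder (Function.update bB k mB) (k+1)) ?_ ?_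
    · refine subset_of_eq ?_
      rw [← iUnion_cylinder_update bB k, image_iUnion]
    · intro mB
      refine sepR_iterA k _
        (fun i m => g i '' cylinder (Function.update (b i) (k - i) m) (k - i + 1)) ?_ ?_
      · intro i
        refine subset_of_eq ?_
        rw [← iUnion_cylinder_update (b i) (k - i), image_iUnion]
      · intro m
        have hfam : (fun i => if i ≤ k then
              g i '' cylinder (Function.update (b i) (k - i) (m i)) (k - i + 1)
              else g i '' cylinder (b i) (k - i))
            = fun i => g i '' cylinder
                ((fun j => if j ≤ k then Function.update (b j) (k - j) (m j) else b j) i)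
                (k + 1 - i) := by
          funext i
          dsimp only
          by_cases hi : i ≤ k
          · rw [if_pos hi, if_pos hi, (by omega : k + 1 - i = k - i + 1)]
          · rw [if_neg hi, if_neg hi, (by omega : k + 1 - i = 0), (by omega : k - i = 0)]
        rw [hfam]
        refine hstep _ _ (update_mem_cylinder _ _ _) (fun i => ?_)
        by_cases hi : i ≤ k
        · simp only [if_pos hi]
          exact update_mem_cylinder _ _ _
        · simp only [if_neg hi, (by omega : k - i = 0), cylinder_zero]
          trivial
  let AA := {q : (ℕ → ℕ) × (ℕ → ℕ → ℕ) × ℕ //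
    ¬ SepR (φ '' cylinder q.1 q.2.2) (fun i => g i '' cylinder (q.2.1 i) (q.2.2 - i)) F}
  have step : ∀ p : AA, ∃ q : AA, q.1.2.2 = p.1.2.2 + 1 ∧ q.1.1 ∈ cylinder p.1.1 p.1.2.2 ∧
      ∀ i, q.1.2.1 i ∈ cylinder (p.1.2.1 i) (p.1.2.2 - i) := by
    rintro ⟨⟨bB, b, k⟩, hp⟩
    obtain ⟨bB', b', h1, h2, h3⟩ := I k bB b hp
    exact ⟨⟨⟨bB', b', k+1⟩, h3⟩, rfl, h1, h2⟩
  choose FF hFn hFx hFy using step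
  have hp0 : ¬ SepR (φ '' cylinder (fun _ => 0) 0)
      (fun i => g i '' cylinder ((fun _ _ => 0 : ℕ → ℕ → ℕ) i) (0 - i)) F := by
    simpa only [cylinder_zero, image_univ, Nat.zero_sub] using hsep
  let p0 : AA := ⟨⟨fun _ => 0, fun _ _ => 0, 0⟩, hp0⟩
  let p : ℕ → AA := fun n => FF^[n] p0
  have prec : ∀ n, p (n + 1) = FF (p n) := fun n => by
    simp only [p, Function.iterate_succ', Function.comp_apply]
  have pstage : ∀ n, (p n).1.2.2 = n := by
    intro n
    induction n with
    | zero => rfl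
    | succ n IH => rw [prec, hFn, IH]
  have hIx : ∀ m N, m + 1 ≤ N → (p N).1.1 m = (p (m + 1)).1.1 m := by
    intro m
    refine Nat.le_induction rfl ?_
    intro N hmN IH
    have : (FF (p N)).1.1 m = (p N).1.1 m := by
      have := hFx (p N)
      rw [pstage] at this
      exact mem_cylinder_iff.1 this m (by omega)
    rw [prec, this, IH]
  have hIy : ∀ i m N, i + m + 1 ≤ N → (p N).1.2.1 i m = (p (i + m + 1)).1.2.1 i m := by
    intro i m
    refine Nat.le_induction rfl ?_
    intro N hmN IH
    have : (FF (p N)).1.2.1 i m = (p N).1.2.1 i m := by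
      have := hFy (p N) i
      rw [pstage] at this
      exact mem_cylinder_iff.1 this m (by omega)
    rw [prec, this, IH]
  set xB : ℕ → ℕ := fun m => (p (m + 1)).1.1 m with hxB
  set x : ℕ → ℕ → ℕ := fun i m => (p (i + m + 1)).1.2.1 i m with hx
  have hcylB : ∀ k, cylinder xB k = cylinder ((p k).1.1) k := by
    intro k
    rw [← mem_cylinder_iff_eq]
    exact mem_cylinder_iff.2 fun m hm => (hIx m k hm).symm
  have hcyl : ∀ k i, cylinder (x i) (k - i) = cylinder ((p k).1.2.1 i) (k - i) := by
    intro k i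
    rw [← mem_cylinder_iff_eq]
    exact mem_cylinder_iff.2 fun m hm => (hIy i m k (by omega)).symm
  have M : ∀ k, ¬ SepR (φ '' cylinder xB k) (fun i => g i '' cylinder (x i) (k - i)) F := by
    intro k
    have hk := (p k).2
    rw [pstage k] at hk
    rw [hcylB k]
    have hfam : (fun i => g i '' cylinder (x i) (k - i))
        = fun i => g i '' cylinder ((p k).1.2.1 i) (k - i) := funext fun i => by rw [hcyl k i]
    rw [hfam]
    exact hk
  letI : MetricSpace (ℕ → ℕ) := metricSpaceNatNat
  have key : ∀ n, (φ xB).1 = g n (x n) ∨ (φ xB).2 ∈ F n := by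
    intro n
    by_contra hcon
    push_neg at hcon
    obtain ⟨hne, hnF⟩ := hcon
    obtain ⟨U, V, hU, hV, hxU, hxV, hUV⟩ := t2_separation hne
    have hopen : IsOpen (U ×ˢ (F n)ᶜ) := hU.prod (hF n).isOpen_compl
    have hmem : φ xB ∈ U ×ˢ (F n)ᶜ := ⟨hxU, hnF⟩
    obtain ⟨εB, hεB, hballB⟩ : ∃ ε : ℝ, ε > 0 ∧ Metric.ball xB ε ⊆ φ ⁻¹' (U ×ˢ (F n)ᶜ) :=
      Metric.mem_nhds_iff.1 (hφ.continuousAt.preimage_mem_nhds (hopen.mem_nhds hmem))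
    obtain ⟨εg, hεg, hballg⟩ : ∃ ε : ℝ, ε > 0 ∧ Metric.ball (x n) ε ⊆ g n ⁻¹' V :=
      Metric.mem_nhds_iff.1 ((hg n).continuousAt.preimage_mem_nhds (hV.mem_nhds hxV))
    obtain ⟨k0, hk0⟩ : ∃ k0 : ℕ, (1/2 : ℝ) ^ k0 < min εB εg :=
      exists_pow_lt_of_lt_one (lt_min hεB hεg) (by norm_num)
    refine M (k0 + n) ⟨U ×ˢ (F n)ᶜ, Function.update (fun _ => (univ : Set X)) n V,
      hU.measurableSet.prod (hF n).isOpen_compl.measurableSet, ?_, ?_, ?_, ?_⟩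
    · intro i
      by_cases hi : i = n
      · subst hi; rw [Function.update_self]; exact hV.measurableSet
      · rw [Function.update_of_ne hi]; exact MeasurableSet.univ
    · rintro q ⟨z, hz, rfl⟩
      apply hballB
      have : dist z xB ≤ (1/2 : ℝ) ^ (k0 + n) := mem_cylinder_iff_dist_le.1 hz
      calc dist z xB ≤ (1/2 : ℝ) ^ (k0 + n) := this
        _ ≤ (1/2 : ℝ) ^ k0 := pow_le_pow_of_le_one (by norm_num) (by norm_num) (by omega)
        _ < min εB εg := hk0
        _ ≤ εB := min_le_left _ _
    · intro i
      by_cases hi : i = n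
      · subst hi
        rw [Function.update_self]
        rintro w ⟨z, hz, rfl⟩
        apply hballg
        have : dist z (x i) ≤ (1/2 : ℝ) ^ (k0 + i - i) := mem_cylinder_iff_dist_le.1 hz
        rw [(by omega : k0 + i - i = k0)] at this
        calc dist z (x i) ≤ (1/2 : ℝ) ^ k0 := this
          _ < min εB εg := hk0
          _ ≤ εg := min_le_right _ _
      · rw [Function.update_of_ne hi]
        exact subset_univ _
    · rintro q ⟨hq1, hq2⟩
      refine ⟨n, ?_, hq2⟩
      rw [Function.update_self]
      exact disjoint_left.1 hUV hq1
  obtain ⟨n, hn1, hn2⟩ := H (φ xB) (mem_range_self _)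
  rcases key n with h | h
  · exact hn1 ⟨x n, h.symm⟩
  · exact hn2 h

end Core

section Wrapper

variable {X Y : Type*} [TopologicalSpace X] [PolishSpace X] [TopologicalSpace Y] [PolishSpace Y]
  [MeasurableSpace X] [OpensMeasurableSpace X] [MeasurableSpace Y] [OpensMeasurableSpace Y]

theorem sepR_of_analytic (B : Set (X × Y)) (hB : AnalyticSet B) (A : ℕ → Set X)
    (hA : ∀ n, AnalyticSet (A n)) (F : ℕ → Set Y) (hF : ∀ n, IsClosed (F n))
    (H : ∀ p ∈ B, ∃ n, p.1 ∉ A n ∧ p.2 ∉ F n) : SepR B A F := by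
  classical
  set Finf : Set Y := ⋂ n, (if A n = ∅ then F n else univ) with hFinf
  have hFinfc : IsClosed Finf := by
    refine isClosed_iInter fun n => ?_
    split
    · exact hF n
    · exact isClosed_univ
  have hFinfm : ∀ y, y ∈ Finf ↔ ∀ n, A n = ∅ → y ∈ F n := by
    intro y
    simp only [hFinf, mem_iInter]
    constructor
    · intro h n hn
      have := h n
      rwa [if_pos hn] at this
    · intro h n
      split
      · exact h n ‹_›
      · trivial
  set B2 : Set (X × Y) := B ∩ (Prod.snd ⁻¹' Finf) with hB2
  have hB2a : AnalyticSet B2 := by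
    have heq : B2 = ⋂ b : Bool, (if b = true then B else Prod.snd ⁻¹' Finf) := by
      ext p
      simp only [mem_iInter, Bool.forall_bool, if_true, if_false, hB2, mem_inter_iff,
        reduceIte]
      exact ⟨fun h => ⟨h.2, h.1⟩, fun h => ⟨h.2, h.1⟩⟩
    rw [heq]
    refine AnalyticSet.iInter fun b => ?_
    cases b
    · simpa using (hFinfc.preimage continuous_snd).analyticSet
    · simpa using hB
  have hBnotin : ∀ p ∈ B, p.2 ∉ Finf → ∃ n, A n = ∅ ∧ p.2 ∉ F n := by
    intro p _ hp
    by_contra hc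
    push_neg at hc
    exact hp ((hFinfm p.2).2 fun n hn => hc n hn)
  rw [AnalyticSet] at hB2a
  rcases hB2a with hB2e | ⟨φ, hφc, hφr⟩
  · refine ⟨Prod.snd ⁻¹' Finfᶜ, fun n => if A n = ∅ then ∅ else univ,
      (hFinfc.measurableSet.compl).preimage measurable_snd, ?_, ?_, ?_, ?_⟩
    · intro n; dsimp only; split <;> simp
    · intro p hp
      simp only [mem_preimage, mem_compl_iff]
      intro hpf
      have : p ∈ B2 := ⟨hp, hpf⟩
      rw [hB2e] at this
      exact this
    · intro n
      dsimp only
      split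
      · rename_i h; simp [h]
      · simp
    · intro p hp
      simp only [mem_preimage, mem_compl_iff, hFinfm] at hp
      push_neg at hp
      obtain ⟨n, hn1, hn2⟩ := hp
      refine ⟨n, ?_, hn2⟩
      dsimp only
      rw [if_pos hn1]
      exact notMem_empty _
  · -- B2 is the range of a continuous function
    have hB2B : B2 ⊆ B := inter_subset_left
    have hANe : ∀ p ∈ B2, ∃ n, (A n).Nonempty ∧ p.1 ∉ A n ∧ p.2 ∉ F n := by
      intro p hp
      obtain ⟨n, h1, h2⟩ := H p (hB2B hp)
      refine ⟨n, ?_, h1, h2⟩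
      rcases eq_empty_or_nonempty (A n) with he | hne
      · exact absurd ((hFinfm p.2).1 hp.2 n he) h2
      · exact hne
    have hn0 : ∃ n0, (A n0).Nonempty := by
      obtain ⟨n, hn, _, _⟩ := hANe (φ (fun _ => 0)) (hφr ▸ mem_range_self _)
      exact ⟨n, hn⟩
    obtain ⟨n0, hn0⟩ := hn0
    set e : ℕ → ℕ := fun n => if (A n).Nonempty then n else n0 with he
    have hee : ∀ k, (A (e k)).Nonempty := by
      intro k
      simp only [he]
      split
      · assumption
      · exact hn0
    have hgex : ∀ k, ∃ gk : (ℕ → ℕ) → X, Continuous gk ∧ range gk = A (e k) := by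
      intro k
      have h := hA (e k)
      rw [AnalyticSet] at h
      rcases h with h | h
      · exact absurd h (hee k).ne_empty
      · exact h
    choose g hgc hgr using hgex
    have core := sepR_core (X := X) (Y := Y) φ hφc g hgc (fun k => F (e k))
      (fun k => hF (e k)) ?_
    · obtain ⟨DD, S, hDDm, hSm, hBDD, hAS, hwit⟩ := core
      refine ⟨DD ∪ Prod.snd ⁻¹' Finfᶜ,
        fun n => if h : (A n).Nonempty then ⋂ k, (if e k = n then S k else univ) else ∅,
        hDDm.union ((hFinfc.measurableSet.compl).preimage measurable_snd), ?_, ?_, ?_, ?_⟩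
      · intro n
        dsimp only
        split
        · refine MeasurableSet.iInter fun k => ?_
          split
          · exact hSm k
          · exact MeasurableSet.univ
        · exact MeasurableSet.empty
      · intro p hp
        by_cases hpf : p.2 ∈ Finf
        · exact Or.inl (hBDD (hφr ▸ (⟨hp, hpf⟩ : p ∈ B2)))
        · exact Or.inr hpf
      · intro n a ha
        dsimp only
        rw [dif_pos ⟨a, ha⟩]
        refine mem_iInter.2 fun k => ?_
        by_cases hk : e k = n
        · rw [if_pos hk]
          exact hAS k (show a ∈ range (g k) by rw [hgr k, hk]; exact ha)
        · rw [if_neg hk]; trivial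
      · intro p hp
        rcases hp with hp | hp
        · obtain ⟨k, h1, h2⟩ := hwit p hp
          refine ⟨e k, ?_, h2⟩
          dsimp only
          rw [dif_pos (hee k)]
          intro hmem
          have := mem_iInter.1 hmem k
          rw [if_pos rfl] at this
          exact h1 this
        · simp only [mem_preimage, mem_compl_iff, hFinfm] at hp
          push_neg at hp
          obtain ⟨n, hn1, hn2⟩ := hp
          refine ⟨n, ?_, hn2⟩
          dsimp only
          rw [dif_neg (by simp [hn1])]
          exact notMem_empty _
    · intro p hp
      obtain ⟨n, hne, h1, h2⟩ := hANe p (hφr ▸ hp)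
      refine ⟨n, ?_, ?_⟩
      · rw [hgr n, he]
        simp only [if_pos hne]
        exact h1
      · simp only [he, if_pos hne]
        exact h2

end Wrapper

section Proj

variable {X Y : Type*} [TopologicalSpace X] [PolishSpace X] [MeasurableSpace X] [BorelSpace X]
  [TopologicalSpace Y] [PolishSpace Y] [MeasurableSpace Y] [BorelSpace Y] [CompactSpace Y]

/-- Projection of a Borel set with closed sections, in a product with a compact Polish
space, is Borel (a case of Novikov's theorem). -/
theorem measurableSet_fst_image_of_closed_sections
    (D : Set (X × Y)) (hD : MeasurableSet D) (hsec : ∀ x, IsClosed {y | (x, y) ∈ D}) :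
    MeasurableSet (Prod.fst '' D) := by
  classical
  obtain ⟨bb, hbc, hbne, hbb⟩ := TopologicalSpace.exists_countable_basis Y
  obtain ⟨V, hV⟩ : ∃ V : ℕ → Set Y, insert ∅ bb = range V :=
    (hbc.insert ∅).exists_eq_range (insert_nonempty _ _)
  have hVopen : ∀ n, IsOpen (V n) := by
    intro n
    have : V n ∈ insert ∅ bb := by rw [hV]; exact mem_range_self _
    rcases this with h | h
    · rw [h]; exact isOpen_empty
    · exact hbb.isOpen h
  have hbasis : ∀ (y : Y) (s : Set Y), IsOpen s → y ∈ s →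
      ∃ n, y ∈ V n ∧ closure (V n) ⊆ s := by
    letI := TopologicalSpace.upgradeIsCompletelyMetrizable Y
    intro y s hs hy
    obtain ⟨ε, hε, hball⟩ := Metric.mem_nhds_iff.1 (hs.mem_nhds hy)
    obtain ⟨v, hvb, hyv, hvball⟩ := hbb.exists_subset_of_mem_open
      (Metric.mem_ball_self (half_pos hε)) Metric.isOpen_ball
    have hvr : v ∈ range V := by rw [← hV]; exact mem_insert_of_mem _ hvb
    obtain ⟨n, hn⟩ := hvr
    refine ⟨n, hn ▸ hyv, ?_⟩
    rw [hn]
    calc closure v ⊆ closure (Metric.ball y (ε / 2)) := closure_mono hvball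
      _ ⊆ Metric.closedBall y (ε / 2) := Metric.closure_ball_subset_closedBall
      _ ⊆ Metric.ball y ε := Metric.closedBall_subset_ball (by linarith)
      _ ⊆ s := hball
  set A : ℕ → Set X := fun n => Prod.fst '' (D ∩ (univ ×ˢ closure (V n))) with hA
  have hAana : ∀ n, AnalyticSet (A n) := by
    intro n
    exact ((hD.inter (MeasurableSet.univ.prod
      isClosed_closure.measurableSet)).analyticSet).image_of_continuous continuous_fst
  have sep := sepR_of_analytic (X := X) (Y := Y) Dᶜ hD.compl.analyticSet A hAana
    (fun n => (V n)ᶜ) (fun n => (hVopen n).isClosed_compl) ?_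
  · obtain ⟨DD, S, hDDm, hSm, hBDD, hAS, hwit⟩ := sep
    set R : ℕ → Set X := fun n => (S n)ᶜ with hR
    have hR1 : ∀ n x, x ∈ R n → ∀ y ∈ V n, (x, y) ∉ D := by
      intro n x hx y hy hxy
      refine hx (hAS n ?_)
      exact ⟨(x, y), ⟨hxy, ⟨trivial, subset_closure hy⟩⟩, rfl⟩
    have hcompl : (Prod.fst '' D)ᶜ =
        ⋃ (s : Finset ℕ), ⋃ (_ : (⋃ n ∈ s, V n) = univ), ⋂ n ∈ s, R n := by
      ext x
      simp only [mem_compl_iff, mem_iUnion, mem_iInter]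
      constructor
      · intro hx
        have hxD : ∀ y : Y, (x, y) ∉ D := by
          intro y hy
          exact hx ⟨(x, y), hy, rfl⟩
        set U : ℕ → Set Y := fun n => if x ∈ R n then V n else ∅ with hU
        have hUopen : ∀ n, IsOpen (U n) := by
          intro n
          simp only [hU]
          split
          · exact hVopen n
          · exact isOpen_empty
        have hUcov : (univ : Set Y) ⊆ ⋃ n, U n := by
          intro y _
          have : (x, y) ∈ DD := hBDD (hxD y)
          obtain ⟨n, h1, h2⟩ := hwit _ this
          simp only [mem_compl_iff, not_not] at h2
          have h1' : x ∈ R n := h1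
          refine mem_iUnion.2 ⟨n, ?_⟩
          simp only [hU]
          rw [if_pos h1']
          exact h2
        obtain ⟨t, ht⟩ := isCompact_univ.elim_finite_subcover U hUopen hUcov
        refine ⟨t.filter (fun n => x ∈ R n), ?_, ?_⟩
        · apply eq_univ_of_univ_subset
          intro y hy
          obtain ⟨n, hnt, hny⟩ := mem_iUnion₂.1 (ht hy)
          have hxR : x ∈ R n := by
            by_contra hc
            simp only [hU, if_neg hc] at hny
            exact hny
          simp only [hU, if_pos hxR] at hny
          exact mem_iUnion₂.2 ⟨n, Finset.mem_filter.2 ⟨hnt, hxR⟩, hny⟩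
        · intro n hn
          exact (Finset.mem_filter.1 hn).2
      · rintro ⟨s, hcov, hmem⟩ ⟨q, hqD, rfl⟩
        have : q.2 ∈ ⋃ n ∈ s, V n := hcov ▸ trivial
        obtain ⟨n, hns, hny⟩ := mem_iUnion₂.1 this
        exact hR1 n q.1 (hmem n hns) q.2 hny (by rwa [Prod.mk.eta])
    have hmeas : MeasurableSet ((Prod.fst '' D)ᶜ) := by
      rw [hcompl]
      refine MeasurableSet.iUnion fun s => MeasurableSet.iUnion fun _ => ?_
      exact MeasurableSet.biInter s.countable_toSet fun n _ => (hSm n).compl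
    simpa using hmeas.compl
  · intro p hp
    have hopen : IsOpen {y | (p.1, y) ∈ D}ᶜ := (hsec p.1).isOpen_compl
    have hpmem : p.2 ∈ {y | (p.1, y) ∈ D}ᶜ := by
      simp only [mem_compl_iff, mem_setOf_eq]
      exact fun h => hp (by rwa [Prod.mk.eta] at h)
    obtain ⟨n, hn1, hn2⟩ := hbasis p.2 _ hopen hpmem
    refine ⟨n, ?_, by simpa using hn1⟩
    rintro ⟨q, ⟨hqD, ⟨-, hqcl⟩⟩, hq1⟩
    refine hn2 hqcl (show (p.1, q.2) ∈ D from ?_)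
    rw [← hq1, Prod.mk.eta]
    exact hqD

end Proj

section Embed

private lemma le_of_forall_pos_le_add' {a b : ℝ} (h : ∀ ε : ℝ, 0 < ε → a ≤ b + ε) : a ≤ b := by
  by_contra hc
  push_neg at hc
  have := h ((a - b) / 2) (by linarith)
  linarith

theorem exists_good_embedding (A : Type*) [TopologicalSpace A] [PolishSpace A] [Nonempty A] :
    ∃ e : A → (ℕ → unitInterval), Continuous e ∧ Function.Injective e := by
  letI := TopologicalSpace.upgradeIsCompletelyMetrizable A
  obtain ⟨u, hu⟩ := TopologicalSpace.exists_dense_seq A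
  refine ⟨fun a n => ⟨min (dist a (u n)) 1,
    ⟨le_min dist_nonneg zero_le_one, min_le_right _ _⟩⟩, ?_, ?_⟩
  · refine continuous_pi fun n => Continuous.subtype_mk ?_ _
    exact (continuous_id.dist continuous_const).min continuous_const
  · intro a b hab
    have hd : ∀ n, min (dist a (u n)) 1 = min (dist b (u n)) 1 := fun n =>
      congrArg Subtype.val (congrFun hab n)
    by_contra hne
    set ε : ℝ := min (dist a b) 1 with hε
    have hεpos : 0 < ε := lt_min (dist_pos.2 hne) one_pos
    have hεle1 : ε ≤ 1 := min_le_right _ _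
    have hεled : ε ≤ dist a b := min_le_left _ _
    obtain ⟨n, hn⟩ := Metric.denseRange_iff.1 hu a (ε / 3) (by linarith)
    have h1 : min (dist a (u n)) 1 = dist a (u n) := min_eq_left (by linarith)
    have h2 : min (dist b (u n)) 1 < ε / 3 := by rw [← hd n, h1]; exact hn
    have h3 : dist b (u n) < ε / 3 := by
      rcases min_lt_iff.1 h2 with h | h
      · exact h
      · linarith
    have htri := dist_triangle a (u n) b
    rw [dist_comm (u n) b] at htri
    linarith

/-- Projection of a Borel set with compact sections in a product of Polish spaces is Borel. -/
theorem measurableSet_fst_image_of_compact_sections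
    {X A : Type*} [TopologicalSpace X] [PolishSpace X] [MeasurableSpace X] [BorelSpace X]
    [TopologicalSpace A] [PolishSpace A] [MeasurableSpace A] [BorelSpace A]
    (D : Set (X × A)) (hD : MeasurableSet D) (hsec : ∀ x, IsCompact {a | (x, a) ∈ D}) :
    MeasurableSet (Prod.fst '' D) := by
  rcases isEmpty_or_nonempty A with hA | hA
  · have : D = ∅ := Set.eq_empty_of_isEmpty D
    simp [this]
  haveI : PolishSpace unitInterval := isClosed_Icc.polishSpace
  obtain ⟨e, hec, hei⟩ := exists_good_embedding A
  have hem : Measurable e := hec.measurable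
  have hembed : MeasurableEmbedding e := hem.measurableEmbedding hei
  have hφ : MeasurableEmbedding (fun p : X × A => (p.1, e p.2)) :=
    MeasurableEmbedding.prodMap MeasurableEmbedding.id hembed
  set D' : Set (X × (ℕ → unitInterval)) := (fun p : X × A => (p.1, e p.2)) '' D with hD'
  have hD'm : MeasurableSet D' := hφ.measurableSet_image' hD
  have hsec' : ∀ x, {h | (x, h) ∈ D'} = e '' {a | (x, a) ∈ D} := by
    intro x
    ext h
    constructor
    · rintro ⟨⟨x', a⟩, hmem, heq⟩
      have h1 : x' = x := congrArg Prod.fst heq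
      have h2 : e a = h := congrArg Prod.snd heq
      exact ⟨a, h1 ▸ hmem, h2⟩
    · rintro ⟨a, ha, rfl⟩
      exact ⟨(x, a), ha, rfl⟩
  have hsecc : ∀ x, IsClosed {h | (x, h) ∈ D'} := by
    intro x
    rw [hsec' x]
    exact ((hsec x).image hec).isClosed
  have hproj : Prod.fst '' D' = Prod.fst '' D := by
    ext x
    constructor
    · rintro ⟨q, ⟨p, hp, heq⟩, hq1⟩
      exact ⟨p, hp, by rw [← hq1, ← heq]⟩
    · rintro ⟨p, hp, hp1⟩
      exact ⟨(p.1, e p.2), ⟨p, hp, rfl⟩, hp1⟩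
  rw [← hproj]
  exact measurableSet_fst_image_of_closed_sections D' hD'm hsecc

end Embed

section Step

variable {X : Type*} [TopologicalSpace X] [PolishSpace X] [MeasurableSpace X] [BorelSpace X]

theorem step_lemma (TT : Set (X × (ℕ → unitInterval))) (n : ℕ) (hm : MeasurableSet TT)
    (hc : ∀ x, IsCompact {h : ℕ → unitInterval | (x, h) ∈ TT})
    (hne : ∀ x, {h : ℕ → unitInterval | (x, h) ∈ TT}.Nonempty) :
    Measurable (fun x => sInf ((fun h : ℕ → unitInterval => (h n : ℝ)) '' {h | (x, h) ∈ TT})) ∧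
    (∀ x, ∃ h0, (x, h0) ∈ TT ∧
      (h0 n : ℝ) = sInf ((fun h : ℕ → unitInterval => (h n : ℝ)) '' {h | (x, h) ∈ TT})) ∧
    (∀ x h, (x, h) ∈ TT →
      sInf ((fun h : ℕ → unitInterval => (h n : ℝ)) '' {h | (x, h) ∈ TT}) ≤ (h n : ℝ)) := by
  haveI : PolishSpace unitInterval := isClosed_Icc.polishSpace
  set coord : (ℕ → unitInterval) → ℝ := fun h => (h n : ℝ) with hcoord
  have hcoordc : Continuous coord := continuous_subtype_val.comp (continuous_apply n)
  have hatt : ∀ x, ∃ h0, (x, h0) ∈ TT ∧ coord h0 = sInf (coord '' {h | (x, h) ∈ TT}) := by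
    intro x
    have himc : IsCompact (coord '' {h | (x, h) ∈ TT}) := (hc x).image hcoordc
    obtain ⟨h0, hh0, hh0e⟩ := himc.sInf_mem ((hne x).image coord)
    exact ⟨h0, hh0, hh0e⟩
  have hlb : ∀ x h, (x, h) ∈ TT → sInf (coord '' {h | (x, h) ∈ TT}) ≤ coord h := by
    intro x h hh
    exact csInf_le ((hc x).image hcoordc).bddBelow (mem_image_of_mem _ hh)
  refine ⟨?_, hatt, hlb⟩
  refine measurable_of_Iic fun r => ?_
  have heq : (fun x => sInf (coord '' {h | (x, h) ∈ TT})) ⁻¹' Iic r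
      = Prod.fst '' (TT ∩ {p | coord p.2 ≤ r}) := by
    ext x
    simp only [mem_preimage, mem_Iic]
    constructor
    · intro hx
      obtain ⟨h0, hh0, he⟩ := hatt x
      exact ⟨(x, h0), ⟨hh0, by show coord h0 ≤ r; rw [he]; exact hx⟩, rfl⟩
    · rintro ⟨p, ⟨hpT, hpc⟩, hp1⟩
      have hpT' : (x, p.2) ∈ TT := by rw [← hp1, Prod.mk.eta]; exact hpT
      exact (hlb x p.2 hpT').trans hpc
  rw [heq]
  apply measurableSet_fst_image_of_closed_sections
  · exact hm.inter (measurableSet_le (hcoordc.measurable.comp measurable_snd) measurable_const)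
  · intro x
    have : {h | (x, h) ∈ TT ∩ {p | coord p.2 ≤ r}}
        = {h : ℕ → unitInterval | (x, h) ∈ TT} ∩ coord ⁻¹' Iic r := rfl
    rw [this]
    exact ((hc x).inter_right (IsClosed.preimage hcoordc isClosed_Iic)).isClosed

end Step

/-- Measurable selection of minimizers: let `X, A` be Polish spaces, `K` a Borel
subset of `X × A` with nonempty sections `A(x) = {a | (x,a) ∈ K}`, and let `u` be
nonnegative and (sequentially) lower semicontinuous on `K`, and inf-compact on `K`
(every set `{a ∈ A(x) | u(x,a) ≤ r}` is compact). Then there is a Borel measurable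
selector `f : X → A`, `f(x) ∈ A(x)`, attaining `u*(x) = inf_{a ∈ A(x)} u(x,a)` for
every `x`, and `u*` is Borel measurable. -/
theorem exists_measurable_selector_of_infCompact
    {X A : Type*}
    [TopologicalSpace X] [PolishSpace X] [MeasurableSpace X] [BorelSpace X]
    [TopologicalSpace A] [PolishSpace A] [MeasurableSpace A] [BorelSpace A]
    (K : Set (X × A)) (hK : MeasurableSet K)
    (hKne : ∀ x : X, ∃ a : A, (x, a) ∈ K)
    (u : X × A → ℝ)
    (hu_nonneg : ∀ p ∈ K, 0 ≤ u p)
    (hu_lsc : ∀ p ∈ K, ∀ seq : ℕ → X × A, (∀ n, seq n ∈ K) →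
      Tendsto seq atTop (𝓝 p) → u p ≤ atTop.liminf fun n => u (seq n))
    (hu_infcompact : ∀ (x : X) (r : ℝ), IsCompact {a : A | (x, a) ∈ K ∧ u (x, a) ≤ r}) :
    ∃ f : X → A, Measurable f ∧ (∀ x, (x, f x) ∈ K) ∧
      (∀ x, u (x, f x) = ⨅ a : {a : A // (x, a) ∈ K}, u (x, (a : A))) ∧
      Measurable fun x => ⨅ a : {a : A // (x, a) ∈ K}, u (x, (a : A)) := by

  classical
  rcases isEmpty_or_nonempty X with hX | hX
  · exact ⟨fun x => (hKne x).choose, measurable_of_empty _, fun x => (hKne x).choose_spec,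
      fun x => isEmptyElim x, measurable_of_empty _⟩
  haveI : Nonempty A := ⟨(hKne (Classical.arbitrary X)).choose⟩
  haveI : PolishSpace unitInterval := isClosed_Icc.polishSpace
  haveI hnex : ∀ x : X, Nonempty {a : A // (x, a) ∈ K} :=
    fun x => ⟨⟨(hKne x).choose, (hKne x).choose_spec⟩⟩
  set ustar : X → ℝ := fun x => ⨅ a : {a : A // (x, a) ∈ K}, u (x, (a : A)) with hustar
  have hbdd : ∀ x, BddBelow (range fun a : {a : A // (x, a) ∈ K} => u (x, (a : A))) := by
    intro x
    refine ⟨0, ?_⟩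
    rintro r ⟨a, rfl⟩
    exact hu_nonneg _ a.2
  have hle : ∀ x a, (x, a) ∈ K → ustar x ≤ u (x, a) := fun x a ha => ciInf_le (hbdd x) ⟨a, ha⟩
  have hexlt : ∀ x c, ustar x < c → ∃ a, (x, a) ∈ K ∧ u (x, a) < c := by
    intro x c hc
    obtain ⟨a, ha⟩ := exists_lt_of_ciInf_lt hc
    exact ⟨a, a.2, ha⟩
  have hSrm : ∀ r : ℝ, MeasurableSet {p : X × A | p ∈ K ∧ u p ≤ r} := by
    intro r
    have hsub : K ∩ closure {p : X × A | p ∈ K ∧ u p ≤ r} ⊆ {p : X × A | p ∈ K ∧ u p ≤ r} := by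
      rintro p ⟨hpK, hpc⟩
      obtain ⟨seq, hseqmem, hseqlim⟩ := mem_closure_iff_seq_limit.1 hpc
      refine ⟨hpK, ?_⟩
      have hlsc := hu_lsc p hpK seq (fun n => (hseqmem n).1) hseqlim
      have hliminf : atTop.liminf (fun n => u (seq n)) ≤ r := by
        rw [Filter.liminf_eq]
        refine csSup_le ⟨0, Filter.Eventually.of_forall fun n => hu_nonneg _ (hseqmem n).1⟩ ?_
        rintro b hb
        obtain ⟨n, hn⟩ := hb.exists
        exact hn.trans (hseqmem n).2
      linarith
    have heqc : {p : X × A | p ∈ K ∧ u p ≤ r} = K ∩ closure {p : X × A | p ∈ K ∧ u p ≤ r} :=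
      Subset.antisymm (fun p hp => ⟨hp.1, subset_closure hp⟩) hsub
    rw [heqc]
    exact hK.inter isClosed_closure.measurableSet
  have hproj : ∀ r : ℝ, MeasurableSet (Prod.fst '' {p : X × A | p ∈ K ∧ u p ≤ r}) := by
    intro r
    refine measurableSet_fst_image_of_compact_sections _ (hSrm r) fun x => ?_
    exact hu_infcompact x r
  have hustarm : Measurable ustar := by
    refine measurable_of_Iic fun r => ?_
    have heqi : ustar ⁻¹' Iic r
        = ⋂ k : ℕ, Prod.fst '' {p : X × A | p ∈ K ∧ u p ≤ r + 1 / ((k : ℝ) + 1)} := by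
      ext x
      simp only [mem_preimage, mem_Iic, mem_iInter]
      constructor
      · intro hx k
        obtain ⟨a, haK, hau⟩ := hexlt x (r + 1 / ((k : ℝ) + 1))
          (lt_of_le_of_lt hx (lt_add_of_pos_right r (by positivity)))
        exact ⟨(x, a), ⟨haK, hau.le⟩, rfl⟩
      · intro hx
        refine le_of_forall_pos_le_add' fun ε hε => ?_
        obtain ⟨k, hk⟩ := exists_nat_one_div_lt hε
        obtain ⟨p, ⟨hpK, hpu⟩, hp1⟩ := hx k
        have hpK' : (x, p.2) ∈ K := by rw [← hp1, Prod.mk.eta]; exact hpK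
        have h1 := hle x p.2 hpK'
        have hup : u (x, p.2) = u p := by rw [← hp1, Prod.mk.eta]
        rw [hup] at h1
        linarith
    rw [heqi]
    exact MeasurableSet.iInter fun k => hproj _
  have hatt : ∀ x, ∃ a, (x, a) ∈ K ∧ u (x, a) = ustar x := by
    intro x
    set C : ℕ → Set A := fun k => {a | (x, a) ∈ K ∧ u (x, a) ≤ ustar x + 1 / ((k : ℝ) + 1)}
      with hC
    have hCne : ∀ k, (C k).Nonempty := by
      intro k
      obtain ⟨a, haK, hau⟩ := hexlt x (ustar x + 1 / ((k : ℝ) + 1))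
        (lt_add_of_pos_right _ (by positivity))
      exact ⟨a, haK, hau.le⟩
    have hCc : ∀ k, IsCompact (C k) := fun k => hu_infcompact x _
    have hCanti : ∀ k, C (k + 1) ⊆ C k := by
      rintro k a ⟨h1, h2⟩
      refine ⟨h1, h2.trans (add_le_add_right ?_ _)⟩
      exact one_div_le_one_div_of_le (by positivity) (by push_cast; linarith)
    obtain ⟨a, ha⟩ := IsCompact.nonempty_iInter_of_sequence_nonempty_isCompact_isClosed
      C hCanti hCne (hCc 0) (fun k => (hCc k).isClosed)
    have hak : ∀ k, a ∈ C k := fun k => mem_iInter.1 ha k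
    refine ⟨a, (hak 0).1, le_antisymm ?_ (hle x a (hak 0).1)⟩
    refine le_of_forall_pos_le_add' fun ε hε => ?_
    obtain ⟨k, hk⟩ := exists_nat_one_div_lt hε
    exact (hak k).2.trans (by linarith)
  set M : Set (X × A) := {p | p ∈ K ∧ u p ≤ ustar p.1} with hM
  set w : X × A → ℝ := fun p => if p ∈ K then u p else 0 with hw
  have hwm : Measurable w := by
    refine measurable_of_Iic fun r => ?_
    have heqw : w ⁻¹' Iic r = {p : X × A | p ∈ K ∧ u p ≤ r} ∪ (Kᶜ ∩ {p : X × A | (0 : ℝ) ≤ r}) := by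
      ext p
      by_cases hp : p ∈ K <;> simp [hw, hp]
    rw [heqw]
    refine (hSrm r).union (hK.compl.inter ?_)
    by_cases h0 : (0 : ℝ) ≤ r
    · simp [h0]
    · simp [h0]
  have hMm : MeasurableSet M := by
    have heqM : M = K ∩ {p : X × A | w p ≤ ustar p.1} := by
      ext p
      simp only [hM, hw, mem_inter_iff, mem_setOf_eq]
      constructor
      · rintro ⟨h1, h2⟩
        exact ⟨h1, by rwa [if_pos h1]⟩
      · rintro ⟨h1, h2⟩
        rw [if_pos h1] at h2
        exact ⟨h1, h2⟩
    rw [heqM]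
    exact hK.inter (measurableSet_le hwm (hustarm.comp measurable_fst))
  have hMsecc : ∀ x, IsCompact {a | (x, a) ∈ M} := fun x => hu_infcompact x (ustar x)
  have hMsecne : ∀ x, {a | (x, a) ∈ M}.Nonempty := by
    intro x
    obtain ⟨a, h1, h2⟩ := hatt x
    exact ⟨a, h1, h2.le⟩
  obtain ⟨e, hec, hei⟩ := exists_good_embedding A
  have hembed : MeasurableEmbedding e := hec.measurable.measurableEmbedding hei
  have hφ : MeasurableEmbedding (fun p : X × A => (p.1, e p.2)) :=
    MeasurableEmbedding.prodMap MeasurableEmbedding.id hembed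
  set T0 : Set (X × (ℕ → unitInterval)) := (fun p : X × A => (p.1, e p.2)) '' M with hT0
  have hT0m : MeasurableSet T0 := hφ.measurableSet_image' hMm
  have hT0sec : ∀ x, {h | (x, h) ∈ T0} = e '' {a | (x, a) ∈ M} := by
    intro x
    ext h
    constructor
    · rintro ⟨⟨x', a⟩, hmem, heq⟩
      have h1 : x' = x := congrArg Prod.fst heq
      have h2 : e a = h := congrArg Prod.snd heq
      exact ⟨a, h1 ▸ hmem, h2⟩
    · rintro ⟨a, ha, rfl⟩
      exact ⟨(x, a), ha, rfl⟩
  have hT0c : ∀ x, IsCompact {h | (x, h) ∈ T0} := by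
    intro x
    rw [hT0sec]
    exact (hMsecc x).image hec
  have hT0ne : ∀ x, {h | (x, h) ∈ T0}.Nonempty := by
    intro x
    rw [hT0sec]
    exact (hMsecne x).image e
  let T : ℕ → Set (X × (ℕ → unitInterval)) := fun n => Nat.rec T0
    (fun k Tk => Tk ∩
      {p | (p.2 k : ℝ) ≤ sInf ((fun h : ℕ → unitInterval => (h k : ℝ)) '' {h | (p.1, h) ∈ Tk})}) n
  have hTsucc : ∀ k, T (k + 1) = T k ∩
      {p | (p.2 k : ℝ) ≤ sInf ((fun h : ℕ → unitInterval => (h k : ℝ)) '' {h | (p.1, h) ∈ T k})} :=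
    fun k => rfl
  set mv : ℕ → X → ℝ :=
    fun k x => sInf ((fun h : ℕ → unitInterval => (h k : ℝ)) '' {h | (x, h) ∈ T k}) with hmv
  have hinv : ∀ k, MeasurableSet (T k) ∧ (∀ x, IsCompact {h | (x, h) ∈ T k}) ∧
      (∀ x, {h | (x, h) ∈ T k}.Nonempty) := by
    intro k
    induction k with
    | zero => exact ⟨hT0m, hT0c, hT0ne⟩
    | succ k IH =>
      obtain ⟨hm, hc, hne⟩ := IH
      obtain ⟨hmvmk, hattk, hlbk⟩ := step_lemma (T k) k hm hc hne
      refine ⟨?_, ?_, ?_⟩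
      · rw [hTsucc k]
        refine hm.inter ?_
        have hco : Measurable fun p : X × (ℕ → unitInterval) => (p.2 k : ℝ) :=
          (continuous_subtype_val.comp ((continuous_apply k).comp continuous_snd)).measurable
        have hco2 : Measurable fun p : X × (ℕ → unitInterval) => mv k p.1 :=
          hmvmk.comp measurable_fst
        exact measurableSet_le hco hco2
      · intro x
        have hseq : {h | (x, h) ∈ T (k + 1)} = {h : ℕ → unitInterval | (x, h) ∈ T k} ∩
            (fun h : ℕ → unitInterval => (h k : ℝ)) ⁻¹' Iic (mv k x) := rfl
        rw [hseq]
        exact (hc x).inter_right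
          (IsClosed.preimage (continuous_subtype_val.comp (continuous_apply k)) isClosed_Iic)
      · intro x
        obtain ⟨h0, hh0T, hh0e⟩ := hattk x
        exact ⟨h0, hh0T, le_of_eq hh0e⟩
  have hmvm : ∀ k, Measurable (mv k) :=
    fun k => (step_lemma (T k) k (hinv k).1 (hinv k).2.1 (hinv k).2.2).1
  have hmvatt : ∀ k x, ∃ h0, (x, h0) ∈ T k ∧ (h0 k : ℝ) = mv k x :=
    fun k => (step_lemma (T k) k (hinv k).1 (hinv k).2.1 (hinv k).2.2).2.1
  have hmvlb : ∀ k x h, (x, h) ∈ T k → mv k x ≤ (h k : ℝ) :=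
    fun k => (step_lemma (T k) k (hinv k).1 (hinv k).2.1 (hinv k).2.2).2.2
  have hmvmem : ∀ k x, mv k x ∈ Set.Icc (0 : ℝ) 1 := by
    intro k x
    obtain ⟨h0, _, he⟩ := hmvatt k x
    rw [← he]
    exact (h0 k).2
  set g : X → (ℕ → unitInterval) := fun x k => ⟨mv k x, hmvmem k x⟩ with hg
  have hgm : Measurable g := measurable_pi_iff.2 fun k => Measurable.subtype_mk (hmvm k)
  have hganti : ∀ k, T (k + 1) ⊆ T k := by
    intro k
    rw [hTsucc k]
    exact inter_subset_left
  have hgmem : ∀ x, (x, g x) ∈ T0 := by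
    intro x
    obtain ⟨hx, hhx⟩ := IsCompact.nonempty_iInter_of_sequence_nonempty_isCompact_isClosed
      (fun k => {h | (x, h) ∈ T k}) (fun k h hh => hganti k hh)
      (fun k => (hinv k).2.2 x) ((hinv 0).2.1 x) (fun k => ((hinv k).2.1 x).isClosed)
    have hxk : ∀ k, (x, hx) ∈ T k := fun k => mem_iInter.1 hhx k
    have hgeq : g x = hx := by
      funext k
      apply Subtype.ext
      show mv k x = (hx k : ℝ)
      refine le_antisymm (hmvlb k x hx (hxk k)) ?_
      have h2 := hxk (k + 1)
      rw [hTsucc k] at h2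
      exact h2.2
    rw [hgeq]
    exact hxk 0
  have hgx : ∀ x, ∃ p, p ∈ M ∧ (p.1, e p.2) = (x, g x) := by
    intro x
    obtain ⟨p, hp, heq⟩ := hgmem x
    exact ⟨p, hp, heq⟩
  set f : X → A := fun x => Function.invFun e (g x) with hf
  have hfe : ∀ x, e (f x) = g x := by
    intro x
    obtain ⟨p, hp, heq⟩ := hgx x
    exact Function.invFun_eq ⟨p.2, congrArg Prod.snd heq⟩
  have hfM : ∀ x, (x, f x) ∈ M := by
    intro x
    obtain ⟨p, hpM, heq⟩ := hgx x
    have h1 : p.1 = x := congrArg Prod.fst heq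
    have h2 : e p.2 = g x := congrArg Prod.snd heq
    have h3 : f x = p.2 := hei (by rw [hfe x, ← h2])
    rw [h3, ← h1, Prod.mk.eta]
    exact hpM
  have hfm : Measurable f := by
    intro s hs
    have heqf : f ⁻¹' s = g ⁻¹' (e '' s) := by
      ext x
      simp only [mem_preimage]
      constructor
      · intro h
        exact ⟨f x, h, hfe x⟩
      · rintro ⟨a, ha, hae⟩
        have : a = f x := hei (by rw [hae, hfe x])
        rwa [← this]
    rw [heqf]
    exact hgm (hembed.measurableSet_image' hs)
  exact ⟨f, hfm, fun x => (hfM x).1,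
    fun x => le_antisymm (hfM x).2 (hle x (f x) (hfM x).1), hustarm⟩
end
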